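/- arXiv:0705.4201 — 8 statements merged into one kernel-verified Lean document; each statement's English description precedes it below -/
import Mathlib

section
/- If G = A ⋊ C is a semidirect product in which the induced action of C on the abelianization A/[A,A] is trivial, then for every m ≥ 1 the m-th term of the lower central series satisfies Γₘ(G) = Γₘ(A) ⋊ Γₘ(C), i.e., Γₘ(G) is generated by Γₘ(A) and Γₘ(C), with Γₘ(G) ∩ A = Γₘ(A). -/
open Subgroup SemidirectProduct
open scoped commutatorElement

/-- Three subgroups lemma, relative version. -/
theorem my_three_subgroups {G : Type*} [Group G] {H₁ H₂ H₃ N : Subgroup G} [N.Normal]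
    (h1 : ⁅⁅H₂, H₃⁆, H₁⁆ ≤ N) (h2 : ⁅⁅H₃, H₁⁆, H₂⁆ ≤ N) : ⁅⁅H₁, H₂⁆, H₃⁆ ≤ N := by
  rw [Subgroup.commutator_le]
  intro g hg z hz
  rw [Subgroup.commutator_def H₁ H₂] at hg
  induction hg using Subgroup.closure_induction generalizing z with
  | mem g hgen =>
      obtain ⟨x, hx, y, hy, rfl⟩ := hgen
      have hn1 : ⁅y, ⁅z⁻¹, x⁻¹⁆⁆ ∈ N := by
        have : ⁅⁅z⁻¹, x⁻¹⁆, y⁆ ∈ N :=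
          h2 (commutator_mem_commutator (commutator_mem_commutator (inv_mem hz) (inv_mem hx)) hy)
        simpa [commutatorElement_inv] using N.inv_mem this
      have hn2 : ⁅x⁻¹, ⁅y⁻¹, z⁆⁆ ∈ N := by
        have : ⁅⁅y⁻¹, z⁆, x⁻¹⁆ ∈ N :=
          h1 (commutator_mem_commutator (commutator_mem_commutator (inv_mem hy) hz) (inv_mem hx))
        simpa [commutatorElement_inv] using N.inv_mem this
      have key : ⁅z, ⁅x, y⁆⁆ =
          ((x * z) * ⁅y, ⁅z⁻¹, x⁻¹⁆⁆⁻¹ * (x * z)⁻¹) * ((x * y) * ⁅x⁻¹, ⁅y⁻¹, z⁆⁆⁻¹ * (x * y)⁻¹) := by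
        group
      have hmem : ⁅z, ⁅x, y⁆⁆ ∈ N := by
        rw [key]
        exact N.mul_mem (Subgroup.Normal.conj_mem ‹N.Normal› _ (N.inv_mem hn1) _)
          (Subgroup.Normal.conj_mem ‹N.Normal› _ (N.inv_mem hn2) _)
      simpa [commutatorElement_inv] using N.inv_mem hmem
  | one => simpa using N.one_mem
  | mul a b _ _ iha ihb =>
      have key : ⁅a * b, z⁆ = a * ⁅b, z⁆ * a⁻¹ * ⁅a, z⁆ := by group
      rw [key]
      exact N.mul_mem (Subgroup.Normal.conj_mem ‹N.Normal› _ (ihb z hz) _) (iha z hz)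
  | inv a _ iha =>
      have key : ⁅a⁻¹, z⁆ = a⁻¹ * ⁅a, z⁆⁻¹ * (a⁻¹)⁻¹ := by group
      rw [key]
      exact Subgroup.Normal.conj_mem ‹N.Normal› _ (N.inv_mem (iha z hz)) _

instance lcs_characteristic (G : Type*) [Group G] (n : ℕ) :
    ((⊤ : Subgroup G).lowerCentralSeries n).Characteristic := by
  induction n with
  | zero => rw [Subgroup.lowerCentralSeries_zero]; infer_instance
  | succ n ih => exact Subgroup.commutator_characteristic _ _

theorem aut_mem_lcs {G : Type*} [Group G] (e : G ≃* G) (n : ℕ) {a : G}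
    (ha : a ∈ (⊤ : Subgroup G).lowerCentralSeries n) : e a ∈ (⊤ : Subgroup G).lowerCentralSeries n := by
  have := Subgroup.characteristic_iff_le_comap.mp (lcs_characteristic G n) e
  exact this ha

/-- `⁅Γᵢ(G), Γⱼ(G)⁆ ≤ Γ_{i+j+1}(G)`. -/
theorem lcs_comm (G : Type*) [Group G] (i j : ℕ) :
    ⁅(⊤ : Subgroup G).lowerCentralSeries i, (⊤ : Subgroup G).lowerCentralSeries j⁆ ≤ (⊤ : Subgroup G).lowerCentralSeries (i + j + 1) := by
  induction j generalizing i with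
  | zero =>
      rw [Subgroup.lowerCentralSeries_zero]
      exact le_of_eq rfl
  | succ j ih =>
      have e1 : (⊤ : Subgroup G).lowerCentralSeries (j + 1) = ⁅(⊤ : Subgroup G).lowerCentralSeries j, (⊤ : Subgroup G)⁆ := rfl
      rw [e1, Subgroup.commutator_comm]
      have h1 : ⁅⁅(⊤ : Subgroup G), (⊤ : Subgroup G).lowerCentralSeries i⁆, (⊤ : Subgroup G).lowerCentralSeries j⁆ ≤
          (⊤ : Subgroup G).lowerCentralSeries (i + (j + 1) + 1) := by
        rw [Subgroup.commutator_comm (⊤ : Subgroup G) ((⊤ : Subgroup G).lowerCentralSeries i)]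
        have : (⁅(⊤ : Subgroup G).lowerCentralSeries i, (⊤ : Subgroup G)⁆ : Subgroup G) =
            (⊤ : Subgroup G).lowerCentralSeries (i + 1) := rfl
        rw [this]
        have := ih (i + 1)
        convert this using 2
        omega
      have h2 : ⁅⁅(⊤ : Subgroup G).lowerCentralSeries i, (⊤ : Subgroup G).lowerCentralSeries j⁆, (⊤ : Subgroup G)⁆ ≤
          (⊤ : Subgroup G).lowerCentralSeries (i + (j + 1) + 1) := by
        calc ⁅⁅(⊤ : Subgroup G).lowerCentralSeries i, (⊤ : Subgroup G).lowerCentralSeries j⁆, (⊤ : Subgroup G)⁆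
            ≤ ⁅(⊤ : Subgroup G).lowerCentralSeries (i + j + 1), (⊤ : Subgroup G)⁆ :=
              Subgroup.commutator_mono (ih i) le_rfl
          _ = (⊤ : Subgroup G).lowerCentralSeries (i + j + 2) := rfl
          _ = (⊤ : Subgroup G).lowerCentralSeries (i + (j + 1) + 1) := by ring_nf
      exact my_three_subgroups h1 h2

section Q
variable {A C : Type*} [Group A] [Group C] (φ : C →* MulAut A)

theorem Qbase (h : ∀ (c : C) (a : A), Abelianization.of (φ c a) = Abelianization.of a)
    (c : C) (a : A) : φ c a * a⁻¹ ∈ (⊤ : Subgroup A).lowerCentralSeries 1 := by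
  rw [Subgroup.top_lowerCentralSeries_one]
  have h1 : Abelianization.of (φ c a * a⁻¹) = 1 := by
    rw [map_mul, h c a, map_inv, mul_inv_cancel]
  exact (QuotientGroup.eq_one_iff _).mp h1

theorem Q0 (h : ∀ (c : C) (a : A), Abelianization.of (φ c a) = Abelianization.of a) :
    ∀ i (c : C), ∀ a ∈ (⊤ : Subgroup A).lowerCentralSeries i,
    φ c a * a⁻¹ ∈ (⊤ : Subgroup A).lowerCentralSeries (i + 1) := by
  intro i
  induction i with
  | zero => intro c a _; exact Qbase φ h c a
  | succ i ih =>
      intro c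
      let S : Subgroup A :=
        { carrier := {a | φ c a * a⁻¹ ∈ (⊤ : Subgroup A).lowerCentralSeries (i + 2)}
          one_mem' := by simpa using ((⊤ : Subgroup A).lowerCentralSeries (i + 2)).one_mem
          mul_mem' := by
            intro a₁ a₂ h1 h2
            simp only [Set.mem_setOf_eq] at *
            have key : φ c (a₁ * a₂) * (a₁ * a₂)⁻¹ =
                (φ c a₁ * a₁⁻¹) * (a₁ * (φ c a₂ * a₂⁻¹) * a₁⁻¹) := by
              rw [map_mul]; group
            rw [key]
            exact mul_mem h1 ((Subgroup.lowerCentralSeries_normal ⊤ (i+2)).conj_mem _ h2 _)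
          inv_mem' := by
            intro a ha
            simp only [Set.mem_setOf_eq] at *
            have key : φ c a⁻¹ * (a⁻¹)⁻¹ = a⁻¹ * (φ c a * a⁻¹)⁻¹ * (a⁻¹)⁻¹ := by
              rw [map_inv]; group
            rw [key]
            exact (Subgroup.lowerCentralSeries_normal ⊤ (i+2)).conj_mem _ (inv_mem ha) _ }
      have hle : (⊤ : Subgroup A).lowerCentralSeries (i + 1) ≤ S := by
        have e1 : (⊤ : Subgroup A).lowerCentralSeries (i + 1) = ⁅(⊤ : Subgroup A).lowerCentralSeries i, (⊤ : Subgroup A)⁆ := rfl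
        rw [e1, Subgroup.commutator_le]
        intro x hx y _
        show φ c ⁅x, y⁆ * ⁅x, y⁆⁻¹ ∈ (⊤ : Subgroup A).lowerCentralSeries (i + 2)
        have hu : x⁻¹ * φ c x ∈ (⊤ : Subgroup A).lowerCentralSeries (i + 1) := by
          have h1 := ih c x hx
          have key : x⁻¹ * φ c x = x⁻¹ * (φ c x * x⁻¹) * (x⁻¹)⁻¹ := by group
          rw [key]
          exact (Subgroup.lowerCentralSeries_normal ⊤ (i+1)).conj_mem _ h1 _
        have hv : y⁻¹ * φ c y ∈ (⊤ : Subgroup A).lowerCentralSeries 1 := by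
          have h1 := Qbase φ h c y
          have key : y⁻¹ * φ c y = y⁻¹ * (φ c y * y⁻¹) * (y⁻¹)⁻¹ := by group
          rw [key]
          exact (Subgroup.lowerCentralSeries_normal ⊤ 1).conj_mem _ h1 _
        have hmape : φ c ⁅x, y⁆ = ⁅x * (x⁻¹ * φ c x), y * (y⁻¹ * φ c y)⁆ := by
          rw [mul_inv_cancel_left, mul_inv_cancel_left]
          exact map_commutatorElement ((φ c) : A →* A) x y
        rw [hmape]
        have key : ⁅x * (x⁻¹ * φ c x), y * (y⁻¹ * φ c y)⁆ * ⁅x, y⁆⁻¹ =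
            (x * ⁅x⁻¹ * φ c x, y * (y⁻¹ * φ c y)⁆ * x⁻¹) *
              (⁅x, y⁆ * (y * ⁅x, y⁻¹ * φ c y⁆ * y⁻¹) * ⁅x, y⁆⁻¹) := by group
        rw [key]
        have m1 : ⁅x⁻¹ * φ c x, y * (y⁻¹ * φ c y)⁆ ∈ (⊤ : Subgroup A).lowerCentralSeries (i + 2) := by
          have e2 : (⊤ : Subgroup A).lowerCentralSeries (i + 2) =
              ⁅(⊤ : Subgroup A).lowerCentralSeries (i+1), (⊤ : Subgroup A)⁆ := rfl
          rw [e2]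
          exact commutator_mem_commutator hu (mem_top _)
        have m2 : ⁅x, y⁻¹ * φ c y⁆ ∈ (⊤ : Subgroup A).lowerCentralSeries (i + 2) := by
          have h2 := lcs_comm A i 1
          exact h2 (commutator_mem_commutator hx hv)
        exact mul_mem ((Subgroup.lowerCentralSeries_normal ⊤ (i+2)).conj_mem _ m1 x)
          ((Subgroup.lowerCentralSeries_normal ⊤ (i+2)).conj_mem _
            ((Subgroup.lowerCentralSeries_normal ⊤ (i+2)).conj_mem _ m2 y) ⁅x, y⁆)
      intro a ha
      exact hle ha

end Q

variable {A C : Type*} [Group A] [Group C] (φ : C →* MulAut A)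

theorem Qfull (h : ∀ (c : C) (a : A), Abelianization.of (φ c a) = Abelianization.of a) :
    ∀ j i, ∀ c ∈ (⊤ : Subgroup C).lowerCentralSeries j, ∀ a ∈ (⊤ : Subgroup A).lowerCentralSeries i,
    φ c a * a⁻¹ ∈ (⊤ : Subgroup A).lowerCentralSeries (i + j + 1) := by
  intro j
  induction j with
  | zero => intro i c _ a ha; exact Q0 φ h i c a ha
  | succ j ih =>
      intro i
      have ecast : i + (j + 1) + 1 = i + j + 2 := by omega
      rw [ecast]
      let S : Subgroup C :=
        { carrier := {c | ∀ a ∈ (⊤ : Subgroup A).lowerCentralSeries i, φ c a * a⁻¹ ∈ (⊤ : Subgroup A).lowerCentralSeries (i + j + 2)}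
          one_mem' := by
            intro a _
            simpa using ((⊤ : Subgroup A).lowerCentralSeries (i + j + 2)).one_mem
          mul_mem' := by
            intro c₁ c₂ h1 h2 a ha
            simp only [Set.mem_setOf_eq] at h1 h2
            have key : φ (c₁ * c₂) a * a⁻¹ =
                φ c₁ (φ c₂ a * a⁻¹) * (φ c₁ a * a⁻¹) := by
              rw [map_mul]
              show φ c₁ (φ c₂ a) * a⁻¹ = _
              rw [map_mul, map_inv]
              group
            rw [key]
            exact mul_mem (aut_mem_lcs (φ c₁) _ (h2 a ha)) (h1 a ha)
          inv_mem' := by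
            intro c hc a ha
            simp only [Set.mem_setOf_eq] at hc
            have hb : φ c⁻¹ a ∈ (⊤ : Subgroup A).lowerCentralSeries i := aut_mem_lcs (φ c⁻¹) _ ha
            have h1 := hc _ hb
            have h2 : φ c (φ c⁻¹ a) = a := by
              have : φ c (φ c⁻¹ a) = φ (c * c⁻¹) a := by rw [map_mul]; rfl
              rw [this, mul_inv_cancel, map_one]; rfl
            rw [h2] at h1
            show φ c⁻¹ a * a⁻¹ ∈ _
            have key : φ c⁻¹ a * a⁻¹ = (a * (φ c⁻¹ a)⁻¹)⁻¹ := by group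
            rw [key]
            exact inv_mem h1 }
      have hle : (⊤ : Subgroup C).lowerCentralSeries (j + 1) ≤ S := by
        have e1 : (⊤ : Subgroup C).lowerCentralSeries (j + 1) = ⁅(⊤ : Subgroup C).lowerCentralSeries j, (⊤ : Subgroup C)⁆ := rfl
        rw [e1, Subgroup.commutator_le]
        intro d hd e _
        intro a ha
        show φ ⁅d, e⁆ a * a⁻¹ ∈ (⊤ : Subgroup A).lowerCentralSeries (i + j + 2)
        -- b = φ d⁻¹ (φ e⁻¹ a)
        set b := φ d⁻¹ (φ e⁻¹ a) with hbdef
        have hb : b ∈ (⊤ : Subgroup A).lowerCentralSeries i :=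
          aut_mem_lcs (φ d⁻¹) _ (aut_mem_lcs (φ e⁻¹) _ ha)
        -- u, v, w, w'
        have hu : b⁻¹ * φ e b ∈ (⊤ : Subgroup A).lowerCentralSeries (i + 1) := by
          have h1 := Q0 φ h i e b hb
          have key : b⁻¹ * φ e b = b⁻¹ * (φ e b * b⁻¹) * (b⁻¹)⁻¹ := by group
          rw [key]
          exact (Subgroup.lowerCentralSeries_normal ⊤ (i+1)).conj_mem _ h1 _
        have hv : b⁻¹ * φ d b ∈ (⊤ : Subgroup A).lowerCentralSeries (i + j + 1) := by
          have h1 := ih i d hd b hb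
          have key : b⁻¹ * φ d b = b⁻¹ * (φ d b * b⁻¹) * (b⁻¹)⁻¹ := by group
          rw [key]
          exact (Subgroup.lowerCentralSeries_normal ⊤ (i+j+1)).conj_mem _ h1 _
        set u := b⁻¹ * φ e b with hudef
        set v := b⁻¹ * φ d b with hvdef
        have hw : u⁻¹ * φ d u ∈ (⊤ : Subgroup A).lowerCentralSeries (i + j + 2) := by
          have h1 := ih (i + 1) d hd u hu
          have ecast2 : i + 1 + j + 1 = i + j + 2 := by omega
          rw [ecast2] at h1
          have key : u⁻¹ * φ d u = u⁻¹ * (φ d u * u⁻¹) * (u⁻¹)⁻¹ := by group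
          rw [key]
          exact (Subgroup.lowerCentralSeries_normal ⊤ (i+j+2)).conj_mem _ h1 _
        have hw' : v⁻¹ * φ e v ∈ (⊤ : Subgroup A).lowerCentralSeries (i + j + 2) := by
          have h1 := Q0 φ h (i + j + 1) e v hv
          have key : v⁻¹ * φ e v = v⁻¹ * (φ e v * v⁻¹) * (v⁻¹)⁻¹ := by group
          rw [key]
          exact (Subgroup.lowerCentralSeries_normal ⊤ (i+j+2)).conj_mem _ h1 _
        set w := u⁻¹ * φ d u with hwdef
        set w' := v⁻¹ * φ e v with hw'def
        -- key equalities
        have heb : φ e b = b * u := by rw [hudef, mul_inv_cancel_left]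
        have hdb : φ d b = b * v := by rw [hvdef, mul_inv_cancel_left]
        have hdu : φ d u = u * w := by rw [hwdef, mul_inv_cancel_left]
        have hev : φ e v = v * w' := by rw [hw'def, mul_inv_cancel_left]
        have ha_eq : a = φ e (φ d b) := by
          rw [hbdef]
          have h1 : φ d (φ d⁻¹ (φ e⁻¹ a)) = φ e⁻¹ a := by
            have : φ d (φ d⁻¹ (φ e⁻¹ a)) = φ (d * d⁻¹) (φ e⁻¹ a) := by rw [map_mul]; rfl
            rw [this, mul_inv_cancel, map_one]; rfl
          rw [h1]
          have : φ e (φ e⁻¹ a) = φ (e * e⁻¹) a := by rw [map_mul]; rfl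
          rw [this, mul_inv_cancel, map_one]; rfl
        have hcomm : φ ⁅d, e⁆ a = φ d (φ e b) := by
          rw [hbdef]
          show φ (d * e * d⁻¹ * e⁻¹) a = _
          rw [map_mul, map_mul, map_mul]
          rfl
        rw [hcomm]
        have lhs_eq : φ d (φ e b) = b * v * (u * w) := by
          rw [heb, map_mul, hdb, hdu]
        have rhs_eq : a = b * u * (v * w') := by
          rw [ha_eq, hdb, map_mul, heb, hev]
        rw [lhs_eq]
        nth_rewrite 1 [rhs_eq]
        have key : b * v * (u * w) * (b * u * (v * w'))⁻¹ =
            ((b * v * u) * (w * w'⁻¹) * (b * v * u)⁻¹) * (b * (v * u * v⁻¹ * u⁻¹) * b⁻¹) := by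
          try group
        rw [key]
        have m1 : w * w'⁻¹ ∈ (⊤ : Subgroup A).lowerCentralSeries (i + j + 2) := mul_mem hw (inv_mem hw')
        have m2 : v * u * v⁻¹ * u⁻¹ ∈ (⊤ : Subgroup A).lowerCentralSeries (i + j + 2) := by
          have e2 : (⊤ : Subgroup A).lowerCentralSeries (i + j + 2) =
              ⁅(⊤ : Subgroup A).lowerCentralSeries (i + j + 1), (⊤ : Subgroup A)⁆ := rfl
          rw [e2]
          exact commutator_mem_commutator hv (mem_top u)
        exact mul_mem ((Subgroup.lowerCentralSeries_normal ⊤ (i+j+2)).conj_mem _ m1 _)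
          ((Subgroup.lowerCentralSeries_normal ⊤ (i+j+2)).conj_mem _ m2 _)
      intro c hc a ha
      exact hle hc a ha

variable {A C : Type*} [Group A] [Group C] (φ : C →* MulAut A)

/-- Every element of `inl Γₘ(A) ⊔ inr Γₘ(C)` has the form `inl a * inr c`. -/
theorem struct_lemma (m : ℕ) {x : A ⋊[φ] C}
    (hx : x ∈ ((⊤ : Subgroup A).lowerCentralSeries m).map (inl : A →* A ⋊[φ] C) ⊔
      ((⊤ : Subgroup C).lowerCentralSeries m).map (inr : C →* A ⋊[φ] C)) :
    ∃ a ∈ (⊤ : Subgroup A).lowerCentralSeries m, ∃ c ∈ (⊤ : Subgroup C).lowerCentralSeries m,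
      x = inl a * inr c := by
  let P : Subgroup (A ⋊[φ] C) :=
    { carrier := {x | ∃ a ∈ (⊤ : Subgroup A).lowerCentralSeries m, ∃ c ∈ (⊤ : Subgroup C).lowerCentralSeries m,
        x = inl a * inr c}
      one_mem' := ⟨1, one_mem _, 1, one_mem _, by simp⟩
      mul_mem' := by
        rintro x y ⟨a, ha, c, hc, rfl⟩ ⟨a', ha', c', hc', rfl⟩
        refine ⟨a * φ c a', mul_mem ha (aut_mem_lcs (φ c) m ha'), c * c', mul_mem hc hc', ?_⟩
        have e1 : (inl (φ c a') : A ⋊[φ] C) * inr c = inr c * inl a' := by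
          rw [inl_aut, mul_assoc, ← map_mul, inv_mul_cancel, map_one, mul_one]
        rw [map_mul, map_mul]
        calc inl a * inr c * (inl a' * inr c')
            = inl a * (inr c * inl a') * inr c' := by group
          _ = inl a * (inl (φ c a') * inr c) * inr c' := by rw [e1]
          _ = inl a * inl (φ c a') * (inr c * inr c') := by group
      inv_mem' := by
        rintro x ⟨a, ha, c, hc, rfl⟩
        refine ⟨φ c⁻¹ a⁻¹, aut_mem_lcs (φ c⁻¹) m (inv_mem ha), c⁻¹, inv_mem hc, ?_⟩
        calc (inl a * inr c)⁻¹ = inr c⁻¹ * inl a⁻¹ := by rw [mul_inv_rev, ← map_inv, ← map_inv]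
          _ = (inr c⁻¹ * inl a⁻¹ * inr c) * inr c⁻¹ := by
              rw [mul_assoc, mul_assoc, ← map_mul, mul_inv_cancel, map_one, mul_one]
          _ = inl (φ c⁻¹ a⁻¹) * inr c⁻¹ := by rw [map_inv φ, inl_aut_inv] }
  have hle : ((⊤ : Subgroup A).lowerCentralSeries m).map (inl : A →* A ⋊[φ] C) ⊔
      ((⊤ : Subgroup C).lowerCentralSeries m).map (inr : C →* A ⋊[φ] C) ≤ P := by
    refine sup_le ?_ ?_
    · rintro x ⟨a, ha, rfl⟩
      exact ⟨a, ha, 1, one_mem _, by simp⟩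
    · rintro x ⟨c, hc, rfl⟩
      exact ⟨1, one_mem _, c, hc, by simp⟩
  exact hle hx

variable {A C : Type*} [Group A] [Group C] (φ : C →* MulAut A)

theorem gen_lemma (h : ∀ (c : C) (a : A), Abelianization.of (φ c a) = Abelianization.of a)
    (m : ℕ) :
    (⊤ : Subgroup (A ⋊[φ] C)).lowerCentralSeries m =
      ((⊤ : Subgroup A).lowerCentralSeries m).map (inl : A →* A ⋊[φ] C) ⊔
        ((⊤ : Subgroup C).lowerCentralSeries m).map (inr : C →* A ⋊[φ] C) := by
  induction m with
  | zero =>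
      refine le_antisymm ?_ le_top
      intro x _
      rw [← inl_left_mul_inr_right x]
      exact mul_mem
        (mem_sup_left (mem_map_of_mem _ (mem_top x.left)))
        (mem_sup_right (mem_map_of_mem _ (mem_top x.right)))
  | succ m ih =>
      set T : Subgroup (A ⋊[φ] C) :=
        ((⊤ : Subgroup A).lowerCentralSeries (m+1)).map (inl : A →* A ⋊[φ] C) ⊔
          ((⊤ : Subgroup C).lowerCentralSeries (m+1)).map (inr : C →* A ⋊[φ] C) with hT
      -- T is normal
      have hTnormal : T.Normal := by
        constructor
        intro x hx g
        obtain ⟨a', ha', c', hc', rfl⟩ := struct_lemma φ (m+1) hx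
        rw [← inl_left_mul_inr_right g]
        set a := g.left
        set c := g.right
        have conj1 : (inl a * inr c : A ⋊[φ] C) * inl a' * (inl a * inr c)⁻¹ =
            inl (a * φ c a' * a⁻¹) := by
          rw [mul_inv_rev, ← map_inv, ← map_inv, map_mul, map_mul]
          have e1 : (inl (φ c a') : A ⋊[φ] C) = inr c * inl a' * inr c⁻¹ := inl_aut c a'
          rw [e1]; group
        have conj2 : (inl a * inr c : A ⋊[φ] C) * inr c' * (inl a * inr c)⁻¹ =
            inl (a * φ (c * c' * c⁻¹) a⁻¹) * inr (c * c' * c⁻¹) := by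
          have s1 : (inl a * inr c : A ⋊[φ] C) * inr c' * (inl a * inr c)⁻¹ =
              inl a * inr (c * c' * c⁻¹) * (inl a)⁻¹ := by
            rw [mul_inv_rev, ← map_inv inr c, ← map_inv inl a, map_mul inr (c * c') c⁻¹,
              map_mul inr c c', map_inv inr c]
            group
          have s2 : (inl a : A ⋊[φ] C) * inr (c * c' * c⁻¹) * (inl a)⁻¹ =
              inl (a * φ (c * c' * c⁻¹) a⁻¹) * inr (c * c' * c⁻¹) := by
            rw [map_mul inl a (φ (c * c' * c⁻¹) a⁻¹), inl_aut, map_inv inl a,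
              map_inv inr (c * c' * c⁻¹)]
            group
          exact s1.trans s2
        have key : (inl a * inr c : A ⋊[φ] C) * (inl a' * inr c') * (inl a * inr c)⁻¹ =
            ((inl a * inr c) * inl a' * (inl a * inr c)⁻¹) *
              ((inl a * inr c) * inr c' * (inl a * inr c)⁻¹) := by group
        rw [key, conj1, conj2]
        refine mul_mem (mem_sup_left (mem_map_of_mem _ ?_))
          (mul_mem (mem_sup_left (mem_map_of_mem _ ?_)) (mem_sup_right (mem_map_of_mem _ ?_)))
        · have : φ c a' ∈ (⊤ : Subgroup A).lowerCentralSeries (m+1) := aut_mem_lcs (φ c) _ ha'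
          have e2 : a * φ c a' * a⁻¹ = a * (φ c a') * a⁻¹ := rfl
          exact (Subgroup.lowerCentralSeries_normal ⊤ (m+1)).conj_mem _ this a
        · have hc'' : c * c' * c⁻¹ ∈ (⊤ : Subgroup C).lowerCentralSeries (m+1) :=
            (Subgroup.lowerCentralSeries_normal ⊤ (m+1)).conj_mem _ hc' c
          have h1 := Qfull φ h (m+1) 0 _ hc'' a (by rw [Subgroup.lowerCentralSeries_zero]; trivial)
          have h2 : φ (c * c' * c⁻¹) a * a⁻¹ ∈ (⊤ : Subgroup A).lowerCentralSeries (m+1) :=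
            Subgroup.lowerCentralSeries_antitone ⊤ (by omega) h1
          have key2 : a * φ (c * c' * c⁻¹) a⁻¹ = (φ (c * c' * c⁻¹) a * a⁻¹)⁻¹ := by
            rw [map_inv]; group
          rw [key2]
          exact inv_mem h2
        · exact (Subgroup.lowerCentralSeries_normal ⊤ (m+1)).conj_mem _ hc' c
      -- the two base commutator computations
      have hAx : ∀ n ∈ (⊤ : Subgroup A).lowerCentralSeries m, ∀ x : A ⋊[φ] C, ⁅(inl n : A ⋊[φ] C), x⁆ ∈ T := by
        intro n hn x
        rw [← inl_left_mul_inr_right x]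
        set a := x.left
        set c := x.right
        have key : ⁅(inl n : A ⋊[φ] C), (inl a * inr c : A ⋊[φ] C)⁆ =
            ⁅(inl n : A ⋊[φ] C), (inl a : A ⋊[φ] C)⁆ * (inl a * ⁅(inl n : A ⋊[φ] C), (inr c : A ⋊[φ] C)⁆ * (inl a)⁻¹) := by
          try group
        rw [key]
        have t1 : ⁅(inl n : A ⋊[φ] C), (inl a : A ⋊[φ] C)⁆ = inl ⁅n, a⁆ :=
          (map_commutatorElement (inl : A →* A ⋊[φ] C) n a).symm
        have t2 : ⁅(inl n : A ⋊[φ] C), (inr c : A ⋊[φ] C)⁆ = inl (n * φ c n⁻¹) := by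
          rw [commutatorElement_def, map_mul inl n (φ c n⁻¹), inl_aut c n⁻¹,
            map_inv inl n, map_inv inr c]
          try group
        rw [t1, t2]
        have m1 : ⁅n, a⁆ ∈ (⊤ : Subgroup A).lowerCentralSeries (m+1) := by
          have e2 : (⊤ : Subgroup A).lowerCentralSeries (m+1) =
              ⁅(⊤ : Subgroup A).lowerCentralSeries m, (⊤ : Subgroup A)⁆ := rfl
          rw [e2]; exact commutator_mem_commutator hn (mem_top a)
        have m2 : n * φ c n⁻¹ ∈ (⊤ : Subgroup A).lowerCentralSeries (m+1) := by
          have h1 := Q0 φ h m c n hn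
          have key2 : n * φ c n⁻¹ = (φ c n * n⁻¹)⁻¹ := by rw [map_inv]; group
          rw [key2]; exact inv_mem h1
        exact mul_mem (mem_sup_left (mem_map_of_mem _ m1))
          (hTnormal.conj_mem _ (mem_sup_left (mem_map_of_mem _ m2)) (inl a))
      have hCx : ∀ q ∈ (⊤ : Subgroup C).lowerCentralSeries m, ∀ x : A ⋊[φ] C, ⁅(inr q : A ⋊[φ] C), x⁆ ∈ T := by
        intro q hq x
        rw [← inl_left_mul_inr_right x]
        set a := x.left
        set c := x.right
        have key : ⁅(inr q : A ⋊[φ] C), (inl a * inr c : A ⋊[φ] C)⁆ =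
            ⁅(inr q : A ⋊[φ] C), (inl a : A ⋊[φ] C)⁆ * (inl a * ⁅(inr q : A ⋊[φ] C), (inr c : A ⋊[φ] C)⁆ * (inl a)⁻¹) := by
          try group
        rw [key]
        have t1 : ⁅(inr q : A ⋊[φ] C), (inl a : A ⋊[φ] C)⁆ = inl (φ q a * a⁻¹) := by
          rw [commutatorElement_def, map_mul inl (φ q a) a⁻¹, inl_aut q a,
            map_inv inl a, map_inv inr q]
          try group
        have t2 : ⁅(inr q : A ⋊[φ] C), (inr c : A ⋊[φ] C)⁆ = inr ⁅q, c⁆ :=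
          (map_commutatorElement (inr : C →* A ⋊[φ] C) q c).symm
        rw [t1, t2]
        have m1 : φ q a * a⁻¹ ∈ (⊤ : Subgroup A).lowerCentralSeries (m+1) := by
          have h1 := Qfull φ h m 0 q hq a (by rw [Subgroup.lowerCentralSeries_zero]; trivial)
          have : (0 : ℕ) + m + 1 = m + 1 := by omega
          rwa [this] at h1
        have m2 : ⁅q, c⁆ ∈ (⊤ : Subgroup C).lowerCentralSeries (m+1) := by
          have e2 : (⊤ : Subgroup C).lowerCentralSeries (m+1) =
              ⁅(⊤ : Subgroup C).lowerCentralSeries m, (⊤ : Subgroup C)⁆ := rfl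
          rw [e2]; exact commutator_mem_commutator hq (mem_top c)
        exact mul_mem (mem_sup_left (mem_map_of_mem _ m1))
          (hTnormal.conj_mem _ (mem_sup_right (mem_map_of_mem _ m2)) (inl a))
      refine le_antisymm ?_ ?_
      · have e1 : (⊤ : Subgroup (A ⋊[φ] C)).lowerCentralSeries (m+1) =
            ⁅(⊤ : Subgroup (A ⋊[φ] C)).lowerCentralSeries m, (⊤ : Subgroup (A ⋊[φ] C))⁆ := rfl
        rw [e1, ih, Subgroup.commutator_le]
        intro g hg x _
        obtain ⟨n, hn, q, hq, rfl⟩ := struct_lemma φ m hg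
        have key : ⁅(inl n * inr q : A ⋊[φ] C), x⁆ =
            inl n * ⁅(inr q : A ⋊[φ] C), x⁆ * (inl n)⁻¹ * ⁅(inl n : A ⋊[φ] C), x⁆ := by
          try group
        rw [key]
        exact mul_mem (hTnormal.conj_mem _ (hCx q hq x) (inl n)) (hAx n hn x)
      · exact sup_le
          (fun x hx => Subgroup.lowerCentralSeries.map (inl : A →* A ⋊[φ] C) (m+1) hx)
          (fun x hx => Subgroup.lowerCentralSeries.map (inr : C →* A ⋊[φ] C) (m+1) hx)

universe u

/-- For an almost-direct product `G = A ⋊ C` (the action of `C` on the abelianization of `A`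
is trivial), `Γₘ(G) = Γₘ(A) ⋊ Γₘ(C)`: `Γₘ(G)` is generated by `Γₘ(A)` and `Γₘ(C)`, and
`Γₘ(G) ∩ A = Γₘ(A)`. -/
theorem stmt3 (A C : Type u) [Group A] [Group C] (φ : C →* MulAut A)
    (h : ∀ (c : C) (a : A), Abelianization.of (φ c a) = Abelianization.of a) (m : ℕ) :
    (⊤ : Subgroup (A ⋊[φ] C)).lowerCentralSeries m =
      ((⊤ : Subgroup A).lowerCentralSeries m).map (SemidirectProduct.inl : A →* A ⋊[φ] C) ⊔
        ((⊤ : Subgroup C).lowerCentralSeries m).map (SemidirectProduct.inr : C →* A ⋊[φ] C) ∧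
    (⊤ : Subgroup (A ⋊[φ] C)).lowerCentralSeries m ⊓ (SemidirectProduct.inl : A →* A ⋊[φ] C).range =
      ((⊤ : Subgroup A).lowerCentralSeries m).map (SemidirectProduct.inl : A →* A ⋊[φ] C) := by
  have hgen := gen_lemma φ h m
  refine ⟨hgen, le_antisymm ?_ ?_⟩
  · rintro x hx
    rw [Subgroup.mem_inf] at hx
    obtain ⟨hx1, a₀, rfl⟩ := hx
    rw [hgen] at hx1
    obtain ⟨a, ha, c, hc, hx⟩ := struct_lemma φ m hx1
    have hc1 : c = 1 := by
      have h2 := congrArg (SemidirectProduct.rightHom : A ⋊[φ] C →* C) hx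
      simpa using h2.symm
    rw [hc1, map_one, mul_one] at hx
    exact ⟨a, ha, hx.symm⟩
  · intro x hx
    rw [Subgroup.mem_inf]
    refine ⟨?_, ?_⟩
    · rw [hgen]; exact Subgroup.mem_sup_left hx
    · obtain ⟨a, _, rfl⟩ := hx
      exact ⟨a, rfl⟩
end

section
/- An almost-direct product of two residually nilpotent groups is residually nilpotent. -/
universe u

open Subgroup SemidirectProduct

namespace Stmt4Aux

theorem lcs_succ {G : Type*} [Group G] (n : ℕ) :
    (⊤ : Subgroup G).lowerCentralSeries (n + 1) = ⁅(⊤ : Subgroup G).lowerCentralSeries n, ⊤⁆ := rfl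

theorem three_subgroups {G : Type*} [Group G] {H₁ H₂ H₃ M : Subgroup G} [M.Normal]
    (h1 : ⁅⁅H₂, H₃⁆, H₁⁆ ≤ M) (h2 : ⁅⁅H₃, H₁⁆, H₂⁆ ≤ M) : ⁅⁅H₁, H₂⁆, H₃⁆ ≤ M := by
  have key : ∀ K : Subgroup G, K ≤ M ↔ Subgroup.map (QuotientGroup.mk' M) K = ⊥ := by
    intro K
    rw [Subgroup.map_eq_bot_iff, QuotientGroup.ker_mk']
  rw [key] at h1 h2 ⊢
  rw [Subgroup.map_commutator, Subgroup.map_commutator] at h1 h2 ⊢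
  exact Subgroup.commutator_commutator_eq_bot_of_rotate h1 h2

theorem lcs_commutator_le {G : Type*} [Group G] : ∀ i j : ℕ,
    ⁅(⊤ : Subgroup G).lowerCentralSeries i, (⊤ : Subgroup G).lowerCentralSeries j⁆ ≤ (⊤ : Subgroup G).lowerCentralSeries (i + j + 1)
  | 0, j => by
    rw [Nat.zero_add, Subgroup.lowerCentralSeries_zero, Subgroup.commutator_comm]
    exact (lcs_succ j).ge
  | i + 1, j => by
    rw [lcs_succ]
    refine three_subgroups ?_ ?_
    · rw [Subgroup.commutator_comm (⊤ : Subgroup G) ((⊤ : Subgroup G).lowerCentralSeries j), ← lcs_succ j,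
        Subgroup.commutator_comm ((⊤ : Subgroup G).lowerCentralSeries (j + 1)) ((⊤ : Subgroup G).lowerCentralSeries i)]
      have := lcs_commutator_le (G := G) i (j + 1)
      rwa [show i + (j + 1) + 1 = i + 1 + j + 1 by omega] at this
    · rw [Subgroup.commutator_comm ((⊤ : Subgroup G).lowerCentralSeries j) ((⊤ : Subgroup G).lowerCentralSeries i)]
      refine le_trans (Subgroup.commutator_mono (lcs_commutator_le i j) le_top) ?_
      rw [← lcs_succ]
      rw [show i + j + 1 + 1 = i + 1 + j + 1 by omega]

variable {A C : Type u} [Group A] [Group C] (φ : C →* MulAut A)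

instance : Bracket (A ⋊[φ] C) (A ⋊[φ] C) := commutatorElement

instance : Bracket C C := commutatorElement

/-- image of `γ_q(A)` in the semidirect product -/
def An (q : ℕ) : Subgroup (A ⋊[φ] C) := Subgroup.map inl ((⊤ : Subgroup A).lowerCentralSeries q)

/-- image of `γ_p(C)` in the semidirect product -/
def Cp (p : ℕ) : Subgroup (A ⋊[φ] C) := Subgroup.map inr ((⊤ : Subgroup C).lowerCentralSeries p)

theorem phi_mem {q : ℕ} (c : C) {x : A} (hx : x ∈ (⊤ : Subgroup A).lowerCentralSeries q) :
    φ c x ∈ (⊤ : Subgroup A).lowerCentralSeries q :=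
  Subgroup.lowerCentralSeries.map (φ c).toMonoidHom q ⟨x, hx, rfl⟩

instance An_normal (q : ℕ) : (An φ q).Normal := by
  constructor
  rintro _ ⟨x, hx, rfl⟩ g
  have heq : g * inl x * g⁻¹ = inl (g.left * φ g.right x * g.left⁻¹) := by
    ext <;> simp [mul_assoc]
  rw [heq]
  refine ⟨g.left * φ g.right x * g.left⁻¹, ?_, rfl⟩
  exact ((inferInstance : ((⊤ : Subgroup A).lowerCentralSeries q).Normal).conj_mem) _ (phi_mem φ g.right hx) g.left

theorem comm_inr_inl (c : C) (a : A) :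
    ⁅(inr c : A ⋊[φ] C), (inl a : A ⋊[φ] C)⁆ = (inl (φ c a * a⁻¹) : A ⋊[φ] C) := by
  ext <;> simp [commutatorElement_def]

theorem An_succ (k : ℕ) : An φ (k + 1) = ⁅An φ k, An φ 0⁆ := by
  rw [An, lcs_succ _, Subgroup.map_commutator]
  rfl

theorem Cp_succ (k : ℕ) : Cp φ (k + 1) = ⁅Cp φ k, Cp φ 0⁆ := by
  rw [Cp, lcs_succ _, Subgroup.map_commutator]
  rfl

theorem key0 (h : ∀ (c : C) (a : A), Abelianization.of (φ c a) = Abelianization.of a) :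
    ∀ q : ℕ, ⁅Cp φ 0, An φ q⁆ ≤ An φ (q + 1)
  | 0 => by
    rw [Subgroup.commutator_le]
    rintro _ ⟨c, -, rfl⟩ _ ⟨a, -, rfl⟩
    rw [comm_inr_inl]
    refine ⟨φ c a * a⁻¹, ?_, rfl⟩
    rw [Subgroup.top_lowerCentralSeries_one]
    have h1 : Abelianization.of (φ c a * a⁻¹) = 1 := by
      rw [map_mul, map_inv, h, mul_inv_cancel]
    exact (QuotientGroup.eq_one_iff _).1 h1
  | q + 1 => by
    rw [An_succ, Subgroup.commutator_comm (Cp φ 0) (⁅An φ q, An φ 0⁆)]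
    refine three_subgroups ?_ ?_
    · refine le_trans (Subgroup.commutator_mono
        (le_trans (Subgroup.commutator_comm_le _ _) (key0 h 0)) le_rfl) ?_
      have h1q : ⁅An φ 1, An φ q⁆ ≤ An φ (q + 1 + 1) := by
        rw [An, An, An, ← Subgroup.map_commutator]
        refine le_trans (Subgroup.map_mono (lcs_commutator_le 1 q)) ?_
        rw [show 1 + q + 1 = q + 1 + 1 by omega]
      exact h1q
    · refine le_trans (Subgroup.commutator_mono (key0 h q) le_rfl) ?_
      exact (An_succ φ (q + 1)).ge

theorem key (h : ∀ (c : C) (a : A), Abelianization.of (φ c a) = Abelianization.of a) :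
    ∀ p q : ℕ, ⁅Cp φ p, An φ q⁆ ≤ An φ (p + q + 1)
  | 0, q => by
    have := key0 φ h q
    rwa [show q + 1 = 0 + q + 1 by omega] at this
  | p + 1, q => by
    rw [Cp_succ]
    refine three_subgroups ?_ ?_
    · refine le_trans (Subgroup.commutator_mono (key0 φ h q) le_rfl) ?_
      refine le_trans (Subgroup.commutator_comm_le _ _) ?_
      have := key h p (q + 1)
      rwa [show p + (q + 1) + 1 = p + 1 + q + 1 by omega] at this
    · refine le_trans (Subgroup.commutator_mono
        (le_trans (Subgroup.commutator_comm_le _ _) (key h p q)) le_rfl) ?_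
      have := key0 φ h (p + q + 1)
      rw [show p + q + 1 + 1 = p + 1 + q + 1 by omega] at this
      exact le_trans (Subgroup.commutator_comm_le _ _) this

theorem act (h : ∀ (c : C) (a : A), Abelianization.of (φ c a) = Abelianization.of a) {p q : ℕ} {c : C} (hc : c ∈ (⊤ : Subgroup C).lowerCentralSeries p) {a : A}
    (ha : a ∈ (⊤ : Subgroup A).lowerCentralSeries q) : φ c a * a⁻¹ ∈ (⊤ : Subgroup A).lowerCentralSeries (p + q + 1) := by
  have hmem : ⁅(inr c : A ⋊[φ] C), inl a⁆ ∈ ⁅Cp φ p, An φ q⁆ :=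
    Subgroup.commutator_mem_commutator ⟨c, hc, rfl⟩ ⟨a, ha, rfl⟩
  obtain ⟨y, hy, he⟩ := key φ h p q hmem
  rw [comm_inr_inl] at he
  rwa [← inl_injective he]

/-- The candidate subgroup `γ_n(A) ⋊ γ_n(C)`. -/
def L (n : ℕ) : Subgroup (A ⋊[φ] C) where
  carrier := {x | x.left ∈ (⊤ : Subgroup A).lowerCentralSeries n ∧ x.right ∈ (⊤ : Subgroup C).lowerCentralSeries n}
  one_mem' := ⟨Subgroup.one_mem _, Subgroup.one_mem _⟩
  mul_mem' := by
    rintro a b ⟨ha1, ha2⟩ ⟨hb1, hb2⟩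
    exact ⟨by rw [mul_left]; exact mul_mem ha1 (phi_mem φ _ hb1),
      by rw [mul_right]; exact mul_mem ha2 hb2⟩
  inv_mem' := by
    rintro a ⟨ha1, ha2⟩
    exact ⟨by rw [inv_left]; exact phi_mem φ _ (inv_mem ha1),
      by rw [inv_right]; exact inv_mem ha2⟩

theorem lcs_le_L (h : ∀ (c : C) (a : A), Abelianization.of (φ c a) = Abelianization.of a) : ∀ n : ℕ, (⊤ : Subgroup (A ⋊[φ] C)).lowerCentralSeries n ≤ L φ n
  | 0 => fun x _ => ⟨Subgroup.mem_top _, Subgroup.mem_top _⟩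
  | n + 1 => by
    rw [lcs_succ]
    refine le_trans (Subgroup.commutator_mono (lcs_le_L h n) le_rfl) ?_
    rw [Subgroup.commutator_le]
    rintro x hx y -
    have hEA : ∀ (e : C) (z : A), z ∈ (⊤ : Subgroup A).lowerCentralSeries n →
        QuotientGroup.mk' ((⊤ : Subgroup A).lowerCentralSeries (n + 1)) (φ e z) = QuotientGroup.mk' ((⊤ : Subgroup A).lowerCentralSeries (n + 1)) z := by
      intro e z hz
      have h1 : φ e z * z⁻¹ ∈ (⊤ : Subgroup A).lowerCentralSeries (n + 1) := by
        have := act φ h (p := 0) (Subgroup.mem_top e) hz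
        rwa [Nat.zero_add] at this
      have h2 : QuotientGroup.mk' ((⊤ : Subgroup A).lowerCentralSeries (n + 1)) (φ e z * z⁻¹) = 1 := (QuotientGroup.eq_one_iff _).2 h1
      rwa [map_mul, map_inv, mul_inv_eq_one] at h2
    have hEC : ∀ (c : C), c ∈ (⊤ : Subgroup C).lowerCentralSeries n → ∀ b : A,
        QuotientGroup.mk' ((⊤ : Subgroup A).lowerCentralSeries (n + 1)) (φ c b) = QuotientGroup.mk' ((⊤ : Subgroup A).lowerCentralSeries (n + 1)) b := by
      intro c hc b
      have h1 : φ c b * b⁻¹ ∈ (⊤ : Subgroup A).lowerCentralSeries (n + 1) := by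
        have := act φ h (q := 0) hc (Subgroup.mem_top b)
        rwa [Nat.add_zero] at this
      have h2 : QuotientGroup.mk' ((⊤ : Subgroup A).lowerCentralSeries (n + 1)) (φ c b * b⁻¹) = 1 := (QuotientGroup.eq_one_iff _).2 h1
      rwa [map_mul, map_inv, mul_inv_eq_one] at h2
    constructor
    · -- left component
      show (⁅x, y⁆).left ∈ (⊤ : Subgroup A).lowerCentralSeries (n + 1)
      have hleft : (⁅x, y⁆).left =
          x.left * φ x.right y.left * φ (x.right * y.right * x.right⁻¹) x.left⁻¹ *
            φ (x.right * y.right * x.right⁻¹ * y.right⁻¹) y.left⁻¹ := by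
        simp [commutatorElement_def, mul_assoc]
      have hf : x.right * y.right * x.right⁻¹ * y.right⁻¹ ∈ (⊤ : Subgroup C).lowerCentralSeries n := by
        refine Subgroup.lowerCentralSeries_antitone _ (Nat.le_succ n) ?_
        rw [lcs_succ]
        exact Subgroup.commutator_mem_commutator hx.2 (Subgroup.mem_top _)
      refine (QuotientGroup.eq_one_iff _).1 ?_
      have : QuotientGroup.mk' ((⊤ : Subgroup A).lowerCentralSeries (n + 1)) (⁅x, y⁆).left = 1 := by
        rw [hleft, map_mul, map_mul, map_mul,
          hEC x.right hx.2 y.left, hEA _ _ (inv_mem hx.1), hEC _ hf y.left⁻¹,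
          ← map_mul, ← map_mul, ← map_mul]
        refine (QuotientGroup.eq_one_iff _).2 ?_
        show x.left * y.left * x.left⁻¹ * y.left⁻¹ ∈ (⊤ : Subgroup A).lowerCentralSeries (n + 1)
        rw [lcs_succ]
        exact Subgroup.commutator_mem_commutator hx.1 (Subgroup.mem_top _)
      exact this
    · -- right component
      show (⁅x, y⁆).right ∈ (⊤ : Subgroup C).lowerCentralSeries (n + 1)
      have hr : (⁅x, y⁆).right = ⁅x.right, y.right⁆ := map_commutatorElement rightHom x y
      rw [hr, lcs_succ]
      exact Subgroup.commutator_mem_commutator hx.2 (Subgroup.mem_top _)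

end Stmt4Aux

/-- An almost-direct product of two residually nilpotent groups is residually nilpotent. -/
theorem stmt4 (A C : Type u) [Group A] [Group C] (φ : C →* MulAut A)
    (h : ∀ (c : C) (a : A), Abelianization.of (φ c a) = Abelianization.of a)
    (hA : (⨅ i : ℕ, (⊤ : Subgroup A).lowerCentralSeries i) = ⊥)
    (hC : (⨅ i : ℕ, (⊤ : Subgroup C).lowerCentralSeries i) = ⊥) :
    (⨅ i : ℕ, (⊤ : Subgroup (A ⋊[φ] C)).lowerCentralSeries i) = ⊥ := by
  rw [eq_bot_iff]
  intro g hg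
  rw [Subgroup.mem_iInf] at hg
  have hL : ∀ n, g ∈ Stmt4Aux.L φ n := fun n => Stmt4Aux.lcs_le_L φ h n (hg n)
  have h1 : g.left ∈ (⨅ i : ℕ, (⊤ : Subgroup A).lowerCentralSeries i) :=
    Subgroup.mem_iInf.2 fun n => (hL n).1
  have h2 : g.right ∈ (⨅ i : ℕ, (⊤ : Subgroup C).lowerCentralSeries i) :=
    Subgroup.mem_iInf.2 fun n => (hL n).2
  rw [hA, Subgroup.mem_bot] at h1
  rw [hC, Subgroup.mem_bot] at h2
  rw [Subgroup.mem_bot]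
  exact SemidirectProduct.ext h1 h2
end

section
/- An almost-direct product of two residually torsion-free nilpotent groups is residually torsion-free nilpotent. -/
universe u

/-- A predicate on a monoid saying that there is no non-trivial element of finite order
(the definition `Monoid.IsTorsionFree` of older Mathlib, since removed). -/
def Monoid.IsTorsionFree (G : Type*) [Monoid G] : Prop :=
  ∀ g : G, g ≠ 1 → ¬IsOfFinOrder g

open Subgroup

open scoped commutatorElement

namespace AlmostDirect

variable {G : Type u} [Group G]

/-- Three subgroups lemma relative to a normal subgroup. -/
theorem lcs_succ (n : ℕ) :
    (⊤ : Subgroup G).lowerCentralSeries (n + 1) = ⁅(⊤ : Subgroup G).lowerCentralSeries n, ⊤⁆ := rfl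

theorem three_sub {H K L N : Subgroup G} [N.Normal] (h1 : ⁅⁅K, L⁆, H⁆ ≤ N)
    (h2 : ⁅⁅L, H⁆, K⁆ ≤ N) : ⁅⁅H, K⁆, L⁆ ≤ N := by
  let π := QuotientGroup.mk' N
  have hker : π.ker = N := QuotientGroup.ker_mk' N
  have lift : ∀ {X Y Z : Subgroup G}, ⁅⁅X, Y⁆, Z⁆ ≤ N →
      ⁅⁅Subgroup.map π X, Subgroup.map π Y⁆, Subgroup.map π Z⁆ = ⊥ := by
    intro X Y Z hXYZ
    rw [← Subgroup.map_commutator, ← Subgroup.map_commutator, Subgroup.map_eq_bot_iff, hker]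
    exact hXYZ
  have := Subgroup.commutator_commutator_eq_bot_of_rotate (lift h1) (lift h2)
  rw [← Subgroup.map_commutator, ← Subgroup.map_commutator, Subgroup.map_eq_bot_iff, hker] at this
  exact this

/-- `⁅γᵢ(G), γⱼ(G)⁆ ≤ γ_{i+j+1}(G)`. -/
theorem lcs_comm_le : ∀ (b a : ℕ),
    ⁅(⊤ : Subgroup G).lowerCentralSeries a, (⊤ : Subgroup G).lowerCentralSeries b⁆ ≤ (⊤ : Subgroup G).lowerCentralSeries (a + b + 1)
  | 0, a => by
      rw [Subgroup.lowerCentralSeries_zero, ← lcs_succ]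
  | (b + 1), a => by
      have h1 : ⁅⁅(⊤ : Subgroup G), (⊤ : Subgroup G).lowerCentralSeries a⁆, (⊤ : Subgroup G).lowerCentralSeries b⁆ ≤
          (⊤ : Subgroup G).lowerCentralSeries (a + (b + 1) + 1) := by
        rw [Subgroup.commutator_comm (⊤ : Subgroup G) ((⊤ : Subgroup G).lowerCentralSeries a), ← lcs_succ]
        have := lcs_comm_le b (a + 1)
        have harith : a + 1 + b + 1 = a + (b + 1) + 1 := by omega
        rwa [harith] at this
      have h2 : ⁅⁅(⊤ : Subgroup G).lowerCentralSeries a, (⊤ : Subgroup G).lowerCentralSeries b⁆, (⊤ : Subgroup G)⁆ ≤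
          (⊤ : Subgroup G).lowerCentralSeries (a + (b + 1) + 1) := by
        calc ⁅⁅(⊤ : Subgroup G).lowerCentralSeries a, (⊤ : Subgroup G).lowerCentralSeries b⁆, (⊤ : Subgroup G)⁆
            ≤ ⁅(⊤ : Subgroup G).lowerCentralSeries (a + b + 1), (⊤ : Subgroup G)⁆ :=
              Subgroup.commutator_mono (lcs_comm_le b a) le_rfl
          _ = (⊤ : Subgroup G).lowerCentralSeries (a + b + 2) := (lcs_succ (a + b + 1)).symm
          _ = (⊤ : Subgroup G).lowerCentralSeries (a + (b + 1) + 1) := by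
              have harith : a + b + 2 = a + (b + 1) + 1 := by omega
              rw [harith]
      have key : ⁅⁅(⊤ : Subgroup G).lowerCentralSeries b, (⊤ : Subgroup G)⁆, (⊤ : Subgroup G).lowerCentralSeries a⁆ ≤
          (⊤ : Subgroup G).lowerCentralSeries (a + (b + 1) + 1) := three_sub h1 h2
      rw [Subgroup.commutator_comm]
      rwa [← lcs_succ] at key

theorem map_lcs_surjective {H : Type u} [Group H] (f : G →* H) (hf : Function.Surjective f) :
    ∀ n, Subgroup.map f ((⊤ : Subgroup G).lowerCentralSeries n) = (⊤ : Subgroup H).lowerCentralSeries n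
  | 0 => by simp [Subgroup.map_top_of_surjective f hf]
  | (n + 1) => by
      rw [lcs_succ, lcs_succ, Subgroup.map_commutator, map_lcs_surjective f hf n,
        Subgroup.map_top_of_surjective f hf]

theorem comm_mul_left (x y g : G) : ⁅x * y, g⁆ = x * ⁅y, g⁆ * x⁻¹ * ⁅x, g⁆ := by
  simp only [commutatorElement_def]; group

theorem comm_inv_left (x g : G) : ⁅x⁻¹, g⁆ = x⁻¹ * ⁅x, g⁆⁻¹ * x := by
  simp only [commutatorElement_def]; group

theorem comm_mul_right (x g h : G) : ⁅x, g * h⁆ = ⁅x, g⁆ * (g * ⁅x, h⁆ * g⁻¹) := by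
  simp only [commutatorElement_def]; group

theorem comm_inv_right (x g : G) : ⁅x, g⁻¹⁆ = g⁻¹ * ⁅x, g⁆⁻¹ * g := by
  simp only [commutatorElement_def]; group



variable {Q : Type u} [Group Q]

theorem autpres (p : MulAut Q) {k : ℕ} {x : Q} (hx : x ∈ (⊤ : Subgroup Q).lowerCentralSeries k) :
    p x ∈ (⊤ : Subgroup Q).lowerCentralSeries k :=
  Subgroup.lowerCentralSeries.map p.toMonoidHom k (Subgroup.mem_map_of_mem _ hx)

theorem d_mul {p p' : MulAut Q} {k : ℕ} (hp : ∀ q : Q, q⁻¹ * p q ∈ (⊤ : Subgroup Q).lowerCentralSeries k)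
    (hp' : ∀ q : Q, q⁻¹ * p' q ∈ (⊤ : Subgroup Q).lowerCentralSeries k) :
    ∀ q : Q, q⁻¹ * (p * p') q ∈ (⊤ : Subgroup Q).lowerCentralSeries k := by
  intro q
  have : q⁻¹ * (p * p') q = (q⁻¹ * p' q) * ((p' q)⁻¹ * p (p' q)) := by
    rw [MulAut.mul_apply]; group
  rw [this]
  exact mul_mem (hp' q) (hp (p' q))

theorem d_inv {p : MulAut Q} {k : ℕ} (hp : ∀ q : Q, q⁻¹ * p q ∈ (⊤ : Subgroup Q).lowerCentralSeries k) :
    ∀ q : Q, q⁻¹ * p⁻¹ q ∈ (⊤ : Subgroup Q).lowerCentralSeries k := by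
  intro q
  have h := hp (p⁻¹ q)
  rw [MulAut.apply_inv_self] at h
  have : q⁻¹ * p⁻¹ q = ((p⁻¹ q)⁻¹ * q)⁻¹ := by group
  rw [this]
  exact inv_mem h

theorem d_conj {p : MulAut Q} (s : MulAut Q) {k : ℕ}
    (hp : ∀ q : Q, q⁻¹ * p q ∈ (⊤ : Subgroup Q).lowerCentralSeries k) :
    ∀ q : Q, q⁻¹ * (s * p * s⁻¹) q ∈ (⊤ : Subgroup Q).lowerCentralSeries k := by
  intro q
  have : q⁻¹ * (s * p * s⁻¹) q = s ((s⁻¹ q)⁻¹ * p (s⁻¹ q)) := by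
    simp [MulAut.mul_apply, map_mul, map_inv, MulAut.apply_inv_self]
  rw [this]
  exact autpres s (hp (s⁻¹ q))

/-- If `p` moves every element by `γᵢ`, it moves elements of `γⱼ` by `γᵢ₊ⱼ`. -/
theorem d_shift (p : MulAut Q) (i : ℕ) (hp : ∀ q : Q, q⁻¹ * p q ∈ (⊤ : Subgroup Q).lowerCentralSeries i) :
    ∀ (j : ℕ) (x : Q), x ∈ (⊤ : Subgroup Q).lowerCentralSeries j → x⁻¹ * p x ∈ (⊤ : Subgroup Q).lowerCentralSeries (i + j) := by
  intro j
  induction j with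
  | zero => intro x _; simpa using hp x
  | succ j IH =>
    intro x hx
    rw [lcs_succ, Subgroup.commutator_def] at hx
    induction hx using Subgroup.closure_induction with
    | one =>
      have h1 : (1 : Q)⁻¹ * p 1 = 1 := by simp
      rw [h1]; exact one_mem _
    | mul x y _ _ hx' hy' =>
      have : (x * y)⁻¹ * p (x * y) = (y⁻¹ * (x⁻¹ * p x) * y) * (y⁻¹ * p y) := by
        rw [map_mul]; group
      rw [this]
      exact mul_mem (Subgroup.Normal.conj_mem' inferInstance _ hx' y) hy'
    | inv x _ hx' =>
      have : (x⁻¹)⁻¹ * p x⁻¹ = x * (x⁻¹ * p x)⁻¹ * x⁻¹ := by rw [map_inv]; group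
      rw [this]
      exact Subgroup.Normal.conj_mem inferInstance _ (inv_mem hx') x
    | mem g hg =>
      obtain ⟨u, hu, v, -, rfl⟩ := hg
      set N := (⊤ : Subgroup Q).lowerCentralSeries (i + (j + 1)) with hN
      have hcomm : ⁅(⊤ : Subgroup Q).lowerCentralSeries (i + j), (⊤ : Subgroup Q)⁆ = N := by
        rw [hN, show i + (j + 1) = (i + j) + 1 by omega, lcs_succ]
      set c := u⁻¹ * p u with hc
      set d := v⁻¹ * p v with hd
      have hcm : c ∈ (⊤ : Subgroup Q).lowerCentralSeries (i + j) := IH u hu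
      have hdm : d ∈ (⊤ : Subgroup Q).lowerCentralSeries i := hp v
      have hA : ⁅c, v * d⁆ ∈ N := by
        rw [← hcomm]
        exact Subgroup.commutator_mem_commutator hcm (Subgroup.mem_top _)
      have hB : ⁅u, d⁆ ∈ N := by
        have := lcs_comm_le (G := Q) i j
        have hle : ⁅(⊤ : Subgroup Q).lowerCentralSeries j, (⊤ : Subgroup Q).lowerCentralSeries i⁆ ≤ N := by
          refine le_trans this (Subgroup.lowerCentralSeries_antitone _ ?_); omega
        exact hle (Subgroup.commutator_mem_commutator hu hdm)
      have hpu : p u = u * c := by rw [hc]; group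
      have hpv : p v = v * d := by rw [hd]; group
      have hpy : p ⁅u, v⁆ = u * ⁅c, v * d⁆ * u⁻¹ * (⁅u, v⁆ * (v * ⁅u, d⁆ * v⁻¹)) := by
        have h1 : p ⁅u, v⁆ = ⁅p u, p v⁆ := by
          simp [commutatorElement_def, map_mul, map_inv]
        rw [h1, hpu, hpv, comm_mul_left, comm_mul_right u v d]
      have : ⁅u, v⁆⁻¹ * p ⁅u, v⁆ =
          (⁅u, v⁆⁻¹ * (u * ⁅c, v * d⁆ * u⁻¹) * ⁅u, v⁆) * (v * ⁅u, d⁆ * v⁻¹) := by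
        rw [hpy]; group
      rw [this]
      exact mul_mem
        (Subgroup.Normal.conj_mem' inferInstance _
          (Subgroup.Normal.conj_mem inferInstance _ hA u) _)
        (Subgroup.Normal.conj_mem inferInstance _ hB v)

theorem quot_eq_of {N : Subgroup Q} [N.Normal] {x z : Q} (h : x⁻¹ * z ∈ N) :
    ((x : Q ⧸ N)) = (z : Q ⧸ N) := (QuotientGroup.eq).mpr h

/-- Stability commutator: `[S_i, S_1] ≤ S_{i+1}`. -/
theorem d_commutator {p s : MulAut Q} {i : ℕ} (hi : 1 ≤ i)
    (hp : ∀ q : Q, q⁻¹ * p q ∈ (⊤ : Subgroup Q).lowerCentralSeries i)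
    (hs : ∀ q : Q, q⁻¹ * s q ∈ (⊤ : Subgroup Q).lowerCentralSeries 1) :
    ∀ q : Q, q⁻¹ * (p * s * p⁻¹ * s⁻¹) q ∈ (⊤ : Subgroup Q).lowerCentralSeries (i + 1) := by
  intro q
  set N := (⊤ : Subgroup Q).lowerCentralSeries (i + 1) with hN
  have happ : (p * s * p⁻¹ * s⁻¹) q = p (s (p⁻¹ (s⁻¹ q))) := by
    simp [MulAut.mul_apply]
  rw [happ, ← QuotientGroup.eq (s := N)]
  set y := s⁻¹ q with hy
  set b := y⁻¹ * p⁻¹ y with hb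
  set a := q⁻¹ * y with ha
  set w := q⁻¹ * p⁻¹ q with hw
  set w' := q⁻¹ * p q with hw'
  have hbm : b ∈ (⊤ : Subgroup Q).lowerCentralSeries i := d_inv hp y
  have ham : a ∈ (⊤ : Subgroup Q).lowerCentralSeries 1 := d_inv hs q
  have hwm : w ∈ (⊤ : Subgroup Q).lowerCentralSeries i := d_inv hp q
  have e1 : ((b : Q) : Q ⧸ N) = ((s b : Q) : Q ⧸ N) := by
    refine quot_eq_of ?_
    have h1 := d_shift s 1 hs i b hbm
    have h2 : 1 + i = i + 1 := by omega
    rwa [h2] at h1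
  have e2 : ((s b : Q) : Q ⧸ N) = ((p (s b) : Q) : Q ⧸ N) := by
    refine quot_eq_of ?_
    have h1 := d_shift p i hp i (s b) (autpres s hbm)
    exact Subgroup.lowerCentralSeries_antitone _ (by omega) h1
  have e3 : ((a : Q) : Q ⧸ N) = ((p⁻¹ a : Q) : Q ⧸ N) := by
    refine quot_eq_of ?_
    have h1 := d_shift p⁻¹ i (d_inv hp) 1 a ham
    exact h1
  have e4 : ((w : Q) : Q ⧸ N) = ((p w : Q) : Q ⧸ N) := by
    refine quot_eq_of ?_
    have h1 := d_shift p i hp i w hwm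
    exact Subgroup.lowerCentralSeries_antitone _ (by omega) h1
  have hbeq : b = a⁻¹ * w * p⁻¹ a := by
    have hyqa : y = q * a := by rw [ha]; group
    rw [hb, hw, hyqa, map_mul]; group
  have hbw : ((b : Q) : Q ⧸ N) = ((w : Q) : Q ⧸ N) := by
    have hstep : ((b : Q) : Q ⧸ N) = ((a⁻¹ * w * a : Q) : Q ⧸ N) := by
      rw [hbeq]
      simp only [QuotientGroup.mk_mul]
      rw [← e3]
    rw [hstep]
    symm
    refine quot_eq_of ?_
    have hcm : ⁅w⁻¹, a⁻¹⁆ ∈ ⁅(⊤ : Subgroup Q).lowerCentralSeries i, (⊤ : Subgroup Q).lowerCentralSeries 1⁆ :=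
      Subgroup.commutator_mem_commutator (inv_mem hwm) (inv_mem ham)
    have hle : ⁅(⊤ : Subgroup Q).lowerCentralSeries i, (⊤ : Subgroup Q).lowerCentralSeries 1⁆ ≤ N := by
      refine le_trans (lcs_comm_le 1 i) (Subgroup.lowerCentralSeries_antitone _ ?_); omega
    have hid : w⁻¹ * (a⁻¹ * w * a) = ⁅w⁻¹, a⁻¹⁆ := by
      simp only [commutatorElement_def]; group
    rw [hid]
    exact hle hcm
  have hw'w : ((w' : Q) : Q ⧸ N) = (((w : Q) : Q ⧸ N))⁻¹ := by
    have hident : w' = (p w)⁻¹ := by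
      rw [hw', hw, map_mul, map_inv, MulAut.apply_inv_self]; group
    rw [hident, QuotientGroup.mk_inv, ← e4]
  have c1 : p⁻¹ y = y * b := by rw [hb]; group
  have c2 : s (p⁻¹ y) = q * s b := by rw [c1, map_mul, hy, MulAut.apply_inv_self]
  have c3 : p (s (p⁻¹ y)) = q * w' * p (s b) := by
    have c4 : p q = q * w' := by rw [hw']; group
    rw [c2, map_mul, c4]
  rw [c3]
  simp only [QuotientGroup.mk_mul]
  rw [← e2, ← e1, hbw, hw'w]
  group

section Semi

variable {Q : Type u} [Group Q] {C : Type u} [Group C] (φ : C →* MulAut Q)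

theorem sd_comm_left (x g : Q ⋊[φ] C) :
    (x * g * x⁻¹ * g⁻¹).left =
      x.left * φ x.right g.left * φ (x.right * g.right * x.right⁻¹) x.left⁻¹ *
        φ (x.right * g.right * x.right⁻¹ * g.right⁻¹) g.left⁻¹ := by
  simp [SemidirectProduct.mul_left, SemidirectProduct.mul_right, SemidirectProduct.inv_left,
    SemidirectProduct.inv_right, map_mul, map_inv, MulAut.mul_apply, mul_assoc]

theorem sd_comm_right (x g : Q ⋊[φ] C) :
    (x * g * x⁻¹ * g⁻¹).right = x.right * g.right * x.right⁻¹ * g.right⁻¹ := rfl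

theorem sd_left_mem {i : ℕ} (htriv : ∀ (c : C) (q : Q), q⁻¹ * φ c q ∈ (⊤ : Subgroup Q).lowerCentralSeries 1)
    (x g : Q ⋊[φ] C) (hq : x.left ∈ (⊤ : Subgroup Q).lowerCentralSeries i)
    (hp : ∀ u : Q, u⁻¹ * φ x.right u ∈ (⊤ : Subgroup Q).lowerCentralSeries (i + 1)) :
    (x * g * x⁻¹ * g⁻¹).left ∈ (⊤ : Subgroup Q).lowerCentralSeries (i + 1) := by
  set N := (⊤ : Subgroup Q).lowerCentralSeries (i + 1) with hN
  set q := x.left with hq'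
  set c := x.right with hc'
  set r := g.left with hr'
  set d := g.right with hd'
  rw [sd_comm_left, ← QuotientGroup.eq_one_iff]
  simp only [QuotientGroup.mk_mul]
  have t1 : ((φ c r : Q) : Q ⧸ N) = ((r : Q) : Q ⧸ N) := (quot_eq_of (hp r)).symm
  have t2 : ((φ (c * d * c⁻¹) q⁻¹ : Q) : Q ⧸ N) = ((q⁻¹ : Q) : Q ⧸ N) := by
    symm; refine quot_eq_of ?_
    have h1 := d_shift (φ (c * d * c⁻¹)) 1 (htriv _) i q⁻¹ (inv_mem hq)
    have h2 : 1 + i = i + 1 := by omega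
    rwa [h2] at h1
  have t3 : ((φ (c * d * c⁻¹ * d⁻¹) r⁻¹ : Q) : Q ⧸ N) = ((r⁻¹ : Q) : Q ⧸ N) := by
    set u0 := (φ d)⁻¹ r⁻¹ with hu0
    have h5 : φ (c * d * c⁻¹ * d⁻¹) r⁻¹ = φ c (φ d ((φ c)⁻¹ u0)) := by
      simp [map_mul, map_inv, MulAut.mul_apply, hu0]
    have hdu0 : φ d u0 = r⁻¹ := by rw [hu0, MulAut.apply_inv_self]
    have hz : φ d ((φ c)⁻¹ u0) = r⁻¹ * φ d (u0⁻¹ * (φ c)⁻¹ u0) := by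
      conv_rhs => rw [map_mul, map_inv, hdu0]
      group
    have hmem : φ d (u0⁻¹ * (φ c)⁻¹ u0) ∈ N := autpres _ (d_inv hp u0)
    calc ((φ (c * d * c⁻¹ * d⁻¹) r⁻¹ : Q) : Q ⧸ N)
        = ((φ c (φ d ((φ c)⁻¹ u0)) : Q) : Q ⧸ N) := by rw [h5]
      _ = ((φ d ((φ c)⁻¹ u0) : Q) : Q ⧸ N) := (quot_eq_of (hp _)).symm
      _ = ((r⁻¹ * φ d (u0⁻¹ * (φ c)⁻¹ u0) : Q) : Q ⧸ N) := by rw [hz]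
      _ = ((r⁻¹ : Q) : Q ⧸ N) := by
          rw [QuotientGroup.mk_mul, (QuotientGroup.eq_one_iff _).mpr hmem, mul_one]
  rw [t1, t2, t3]
  have : ((q : Q) : Q ⧸ N) * r * ↑q⁻¹ * ↑r⁻¹ = ((⁅q, r⁆ : Q) : Q ⧸ N) := by
    simp only [commutatorElement_def, QuotientGroup.mk_mul, QuotientGroup.mk_inv]
  rw [this, QuotientGroup.eq_one_iff]
  have : ⁅q, r⁆ ∈ ⁅(⊤ : Subgroup Q).lowerCentralSeries i, (⊤ : Subgroup Q)⁆ :=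
    Subgroup.commutator_mem_commutator hq (Subgroup.mem_top _)
  rwa [← lcs_succ] at this

/-- The interleaved central series of the semidirect product. -/
def sdChain (m : ℕ) : Subgroup (Q ⋊[φ] C) where
  carrier := {t | t.left ∈ (⊤ : Subgroup Q).lowerCentralSeries ((m + 1) / 2) ∧
    ∀ u : Q, u⁻¹ * φ t.right u ∈ (⊤ : Subgroup Q).lowerCentralSeries (m / 2 + 1)}
  one_mem' := by
    constructor
    · exact one_mem _
    · intro u
      simpa using one_mem ((⊤ : Subgroup Q).lowerCentralSeries (m / 2 + 1))
  mul_mem' := by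
    rintro a b ⟨ha1, ha2⟩ ⟨hb1, hb2⟩
    constructor
    · rw [SemidirectProduct.mul_left]
      exact mul_mem ha1 (autpres _ hb1)
    · rw [SemidirectProduct.mul_right, map_mul]
      exact d_mul ha2 hb2
  inv_mem' := by
    rintro a ⟨h1, h2⟩
    constructor
    · rw [SemidirectProduct.inv_left]
      exact autpres _ (inv_mem h1)
    · rw [SemidirectProduct.inv_right, map_inv]
      exact d_inv h2

theorem mem_sdChain {m : ℕ} {t : Q ⋊[φ] C} : t ∈ sdChain φ m ↔
    (t.left ∈ (⊤ : Subgroup Q).lowerCentralSeries ((m + 1) / 2) ∧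
      ∀ u : Q, u⁻¹ * φ t.right u ∈ (⊤ : Subgroup Q).lowerCentralSeries (m / 2 + 1)) := Iff.rfl

theorem sd_nilpotent (hinj : Function.Injective φ) (n : ℕ)
    (hn : (⊤ : Subgroup Q).lowerCentralSeries n = ⊥)
    (htriv : ∀ (c : C) (q : Q), q⁻¹ * φ c q ∈ (⊤ : Subgroup Q).lowerCentralSeries 1) :
    Group.IsNilpotent (Q ⋊[φ] C) := by
  rw [Subgroup.nilpotent_iff_finite_descending_central_series]
  refine ⟨2 * n + 2, sdChain φ, ⟨?_, ?_⟩, ?_⟩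
  · -- H 0 = ⊤
    ext t
    simp only [mem_sdChain, Subgroup.mem_top, iff_true]
    exact ⟨by simpa using Subgroup.mem_top t.left, fun u => htriv t.right u⟩
  · -- descending
    intro x m hx g
    rw [mem_sdChain] at hx ⊢
    obtain ⟨hx1, hx2⟩ := hx
    constructor
    · -- left component
      have hL := sd_left_mem φ htriv x g
        (Subgroup.lowerCentralSeries_antitone _ (show m / 2 ≤ (m + 1) / 2 by omega) hx1)
        (by
          intro u
          have := hx2 u
          exact this)
      have harith : m / 2 + 1 = (m + 1 + 1) / 2 := by omega
      rwa [harith] at hL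
    · -- right component
      intro u
      rw [commutatorElement_def, sd_comm_right]
      rcases Nat.even_or_odd m with ⟨k, hk⟩ | ⟨k, hk⟩
      · -- m = 2k : need Γ (k+1), have δ_p ⊆ Γ (k+1)
        have hme : m / 2 + 1 = k + 1 := by omega
        have htgt : (m + 1) / 2 + 1 = k + 1 := by omega
        rw [hme] at hx2
        have key : ∀ v : Q, v⁻¹ * (φ x.right * (φ g.right * (φ x.right)⁻¹ * (φ g.right)⁻¹)) v ∈
            (⊤ : Subgroup Q).lowerCentralSeries (k + 1) := by
          have h1 : ∀ v : Q, v⁻¹ * (φ g.right * (φ x.right)⁻¹ * (φ g.right)⁻¹) v ∈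
              (⊤ : Subgroup Q).lowerCentralSeries (k + 1) := by
            have := d_conj (p := (φ x.right)⁻¹) (φ g.right) (d_inv hx2)
            intro v; have h := this v
            rwa [mul_assoc] at h
          exact d_mul hx2 h1
        have harr : φ (x.right * g.right * x.right⁻¹ * g.right⁻¹) =
            φ x.right * (φ g.right * (φ x.right)⁻¹ * (φ g.right)⁻¹) := by
          simp [map_mul, map_inv, mul_assoc]
        rw [harr, htgt]
        exact key u
      · -- m = 2k+1 : need Γ (k+2), have p ∈ S_{k+1}
        have hme : m / 2 + 1 = k + 1 := by omega
        have htgt : (m + 1) / 2 + 1 = k + 2 := by omega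
        rw [hme] at hx2
        have key := d_commutator (p := φ x.right) (s := φ g.right)
          (by omega : 1 ≤ k + 1) hx2 (htriv g.right)
        have harr : φ (x.right * g.right * x.right⁻¹ * g.right⁻¹) =
            φ x.right * φ g.right * (φ x.right)⁻¹ * (φ g.right)⁻¹ := by
          simp [map_mul, map_inv]
        rw [harr, htgt]
        have hkk : k + 1 + 1 = k + 2 := rfl
        rw [← hkk]
        exact key u
  · -- bottom
    ext t
    simp only [mem_sdChain, Subgroup.mem_bot]
    constructor
    · rintro ⟨h1, h2⟩
      have hl : t.left = 1 := by
        have := Subgroup.lowerCentralSeries_antitone _ (show n ≤ (2 * n + 2 + 1) / 2 by omega) h1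
        rwa [hn, Subgroup.mem_bot] at this
      have hr : t.right = 1 := by
        apply hinj
        rw [map_one]
        ext u
        have h3 := h2 u
        have := Subgroup.lowerCentralSeries_antitone _ (show n ≤ (2 * n + 2) / 2 + 1 by omega) h3
        rw [hn, Subgroup.mem_bot] at this
        have : φ t.right u = u := by
          have h4 : u * (u⁻¹ * φ t.right u) = φ t.right u := by group
          rw [← h4, this, mul_one]
        simpa using this
      refine SemidirectProduct.ext ?_ ?_ <;> simp [hl, hr]
    · rintro rfl
      refine ⟨one_mem _, fun u => ?_⟩
      simpa using one_mem ((⊤ : Subgroup Q).lowerCentralSeries ((2 * n + 2) / 2 + 1))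

end Semi


section Torsion

variable {G : Type u} [Group G]

theorem finite_closure_central_torsion (W : Finset G)
    (hc : ∀ w ∈ W, w ∈ Subgroup.center G) (ht : ∀ w ∈ W, IsOfFinOrder w) :
    ((Subgroup.closure (W : Set G) : Subgroup G) : Set G).Finite := by
  classical
  induction W using Finset.induction_on with
  | empty => simp [Subgroup.closure_empty]
  | @insert a W' ha IH =>
    have hNle : Subgroup.closure (W' : Set G) ≤ Subgroup.center G :=
      (Subgroup.closure_le _).mpr (fun w hw => hc w (Finset.mem_insert_of_mem hw))
    haveI hNn : (Subgroup.closure (W' : Set G)).Normal := by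
      constructor
      intro x hx g
      have hx' := Subgroup.mem_center_iff.mp (hNle hx)
      have : g * x * g⁻¹ = x := by rw [hx' g]; group
      rwa [this]
    have hsplit : Subgroup.closure ((insert a W' : Finset G) : Set G) =
        Subgroup.zpowers a ⊔ Subgroup.closure (W' : Set G) := by
      rw [Finset.coe_insert, Set.insert_eq, Subgroup.closure_union,
        Subgroup.zpowers_eq_closure]
    rw [hsplit]
    have := Subgroup.mul_normal (Subgroup.zpowers a) (Subgroup.closure (W' : Set G))
    rw [this]
    exact Set.Finite.mul ((ht a (Finset.mem_insert_self a W')).finite_zpowers)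
      (IH (fun w hw => hc w (Finset.mem_insert_of_mem hw))
        (fun w hw => ht w (Finset.mem_insert_of_mem hw)))

theorem chain_exists (S : Finset G) (hSgen : Subgroup.closure (S : Set G) = ⊤)
    (hStor : ∀ x ∈ S, IsOfFinOrder x) :
    ∀ i : ℕ, ∃ W : Finset G, (∀ w ∈ W, w ∈ (⊤ : Subgroup G).lowerCentralSeries i) ∧
      (∀ w ∈ W, ∃ m : ℕ, 0 < m ∧ w ^ m ∈ (⊤ : Subgroup G).lowerCentralSeries (i + 1)) ∧
      (⊤ : Subgroup G).lowerCentralSeries i ≤ Subgroup.closure (W : Set G) ⊔ (⊤ : Subgroup G).lowerCentralSeries (i + 1) := by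
  classical
  intro i
  induction i with
  | zero =>
    refine ⟨S, fun w _ => Subgroup.mem_top w, fun w hw => ⟨orderOf w,
      (hStor w hw).orderOf_pos, by rw [pow_orderOf_eq_one]; exact one_mem _⟩, ?_⟩
    rw [Subgroup.lowerCentralSeries_zero, ← hSgen]
    exact le_sup_left
  | succ i IH =>
    obtain ⟨W, hW1, hW2, hW3⟩ := IH
    set N := (⊤ : Subgroup G).lowerCentralSeries (i + 1 + 1) with hNdef
    set W' : Finset G := (W ×ˢ S).image (fun p => ⁅p.1, p.2⁆) with hW'
    set E : Subgroup (G ⧸ N) :=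
      Subgroup.closure ((QuotientGroup.mk : G → G ⧸ N) '' (W' : Set G)) with hE
    -- centrality of the image of γ_{i+1}
    have hcen : ∀ x : G, x ∈ (⊤ : Subgroup G).lowerCentralSeries (i + 1) →
        ((x : G ⧸ N)) ∈ Subgroup.center (G ⧸ N) := by
      intro x hx
      rw [Subgroup.mem_center_iff]
      intro b
      induction b using QuotientGroup.induction_on with
      | _ g =>
        rw [← QuotientGroup.mk_mul, ← QuotientGroup.mk_mul]
        refine quot_eq_of ?_
        have hm : ⁅x⁻¹, g⁻¹⁆ ∈ N := by
          rw [hNdef, lcs_succ]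
          exact Subgroup.commutator_mem_commutator (inv_mem hx) (Subgroup.mem_top _)
        have hid : (g * x)⁻¹ * (x * g) = ⁅x⁻¹, g⁻¹⁆ := by
          simp only [commutatorElement_def]; group
        rwa [hid]
    have hconj : ∀ z g : G, z ∈ (⊤ : Subgroup G).lowerCentralSeries (i + 1) →
        ((g * z * g⁻¹ : G) : G ⧸ N) = ((z : G) : G ⧸ N) := by
      intro z g hz
      have hcz := Subgroup.mem_center_iff.mp (hcen z hz)
      have := hcz ((g : G) : G ⧸ N)
      calc ((g * z * g⁻¹ : G) : G ⧸ N)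
          = ((g : G) : G ⧸ N) * ((z : G) : G ⧸ N) * (((g : G) : G ⧸ N))⁻¹ := by
            simp [QuotientGroup.mk_mul, QuotientGroup.mk_inv]
        _ = ((z : G) : G ⧸ N) := by rw [this]; group
    have hcommem : ∀ y : G, y ∈ (⊤ : Subgroup G).lowerCentralSeries i → ∀ g : G,
        ⁅y, g⁆ ∈ (⊤ : Subgroup G).lowerCentralSeries (i + 1) := by
      intro y hy g
      rw [lcs_succ]
      exact Subgroup.commutator_mem_commutator hy (Subgroup.mem_top _)
    -- main claim
    have claim : ∀ x : G, x ∈ (⊤ : Subgroup G).lowerCentralSeries i → ∀ g : G,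
        ((⁅x, g⁆ : G) : G ⧸ N) ∈ E := by
      have hxc : (⊤ : Subgroup G).lowerCentralSeries i ≤
          Subgroup.closure ((W : Set G) ∪ ((⊤ : Subgroup G).lowerCentralSeries (i + 1) : Set G)) := by
        rw [Subgroup.closure_union, Subgroup.closure_eq]
        exact hW3
      intro x hx
      have hx' := hxc hx
      clear hx
      have main : x ∈ (⊤ : Subgroup G).lowerCentralSeries i ∧ ∀ g : G, ((⁅x, g⁆ : G) : G ⧸ N) ∈ E := by
        induction hx' using Subgroup.closure_induction with
        | mem y hy =>
          rcases hy with hy | hy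
          · -- y ∈ W
            have hyi : y ∈ (⊤ : Subgroup G).lowerCentralSeries i := hW1 y hy
            refine ⟨hyi, ?_⟩
            intro g
            have hg : g ∈ Subgroup.closure (S : Set G) := by rw [hSgen]; exact Subgroup.mem_top g
            induction hg using Subgroup.closure_induction with
            | mem s hs =>
              refine Subgroup.subset_closure ?_
              refine ⟨⁅y, s⁆, ?_, rfl⟩
              rw [hW']
              simp only [Finset.coe_image, Set.mem_image]
              exact ⟨(y, s), by simpa [Finset.mem_coe, Finset.mem_product] using ⟨hy, hs⟩, rfl⟩
            | one => rw [commutatorElement_one_right]; exact one_mem _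
            | mul g h _ _ ihg ihh =>
              rw [comm_mul_right, QuotientGroup.mk_mul,
                hconj ⁅y, h⁆ g (hcommem y hyi h)]
              exact mul_mem ihg ihh
            | inv g _ ihg =>
              rw [comm_inv_right, QuotientGroup.mk_mul, QuotientGroup.mk_mul]
              have : ((g⁻¹ * ⁅y, g⁆⁻¹ * g : G) : G ⧸ N) = ((⁅y, g⁆⁻¹ : G) : G ⧸ N) := by
                have h2 := hconj ⁅y, g⁆⁻¹ g⁻¹ (inv_mem (hcommem y hyi g))
                calc ((g⁻¹ * ⁅y, g⁆⁻¹ * g : G) : G ⧸ N)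
                    = ((g⁻¹ * ⁅y, g⁆⁻¹ * (g⁻¹)⁻¹ : G) : G ⧸ N) := by rw [inv_inv]
                  _ = ((⁅y, g⁆⁻¹ : G) : G ⧸ N) := h2
              rw [← QuotientGroup.mk_mul, ← QuotientGroup.mk_mul, this, QuotientGroup.mk_inv]
              exact inv_mem ihg
          · -- y ∈ γ_{i+1}
            have hyi : y ∈ (⊤ : Subgroup G).lowerCentralSeries (i + 1) := hy
            refine ⟨Subgroup.lowerCentralSeries_antitone _ (by omega) hyi, ?_⟩
            intro g
            have : ⁅y, g⁆ ∈ N := by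
              rw [hNdef, lcs_succ]
              exact Subgroup.commutator_mem_commutator hyi (Subgroup.mem_top _)
            rw [(QuotientGroup.eq_one_iff _).mpr this]
            exact one_mem _
        | one =>
          refine ⟨one_mem _, fun g => ?_⟩
          rw [commutatorElement_one_left, (QuotientGroup.eq_one_iff _).mpr (one_mem N)]
          exact one_mem _
        | mul z y _ _ ihz ihy =>
          obtain ⟨hz1, hz2⟩ := ihz
          obtain ⟨hy1, hy2⟩ := ihy
          refine ⟨mul_mem hz1 hy1, fun g => ?_⟩
          rw [comm_mul_left, QuotientGroup.mk_mul]
          have : ((z * ⁅y, g⁆ * z⁻¹ : G) : G ⧸ N) = ((⁅y, g⁆ : G) : G ⧸ N) :=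
            hconj ⁅y, g⁆ z (hcommem y hy1 g)
          rw [this]
          exact mul_mem (hy2 g) (hz2 g)
        | inv z _ ihz =>
          obtain ⟨hz1, hz2⟩ := ihz
          refine ⟨inv_mem hz1, fun g => ?_⟩
          rw [comm_inv_left]
          have : ((z⁻¹ * ⁅z, g⁆⁻¹ * z : G) : G ⧸ N) = ((⁅z, g⁆⁻¹ : G) : G ⧸ N) := by
            have h2 := hconj ⁅z, g⁆⁻¹ z⁻¹ (inv_mem (hcommem z hz1 g))
            calc ((z⁻¹ * ⁅z, g⁆⁻¹ * z : G) : G ⧸ N)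
                = ((z⁻¹ * ⁅z, g⁆⁻¹ * (z⁻¹)⁻¹ : G) : G ⧸ N) := by rw [inv_inv]
              _ = ((⁅z, g⁆⁻¹ : G) : G ⧸ N) := h2
          rw [this, QuotientGroup.mk_inv]
          exact inv_mem (hz2 g)
      exact main.2
    -- power homomorphism property
    have hpow : ∀ y : G, y ∈ (⊤ : Subgroup G).lowerCentralSeries i → ∀ g : G, ∀ m : ℕ,
        ((⁅y ^ m, g⁆ : G) : G ⧸ N) = (((⁅y, g⁆ : G) : G ⧸ N)) ^ m := by
      intro y hy g m
      induction m with
      | zero =>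
        rw [pow_zero, pow_zero, commutatorElement_one_left]
        rfl
      | succ m ihm =>
        have hsucc : y ^ (m + 1) = y * y ^ m := by rw [pow_succ']
        rw [hsucc, comm_mul_left, QuotientGroup.mk_mul,
          hconj ⁅y ^ m, g⁆ y (hcommem (y ^ m) (pow_mem hy m) g), ihm, pow_succ]
    refine ⟨W', ?_, ?_, ?_⟩
    · -- membership in γ_{i+1}
      intro w hw
      rw [hW', Finset.mem_image] at hw
      obtain ⟨p, hp, rfl⟩ := hw
      rw [Finset.mem_product] at hp
      exact hcommem p.1 (hW1 p.1 hp.1) p.2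
    · -- torsion modulo γ_{i+2}
      intro w hw
      rw [hW', Finset.mem_image] at hw
      obtain ⟨p, hp, rfl⟩ := hw
      rw [Finset.mem_product] at hp
      obtain ⟨m, hm, hmmem⟩ := hW2 p.1 hp.1
      refine ⟨m, hm, ?_⟩
      have hmkpow : ((⁅p.1, p.2⁆ ^ m : G) : G ⧸ N) = (((⁅p.1, p.2⁆ : G) : G ⧸ N)) ^ m :=
        map_pow (QuotientGroup.mk' N) _ m
      have h1 : ((⁅p.1, p.2⁆ ^ m : G) : G ⧸ N) = ((⁅p.1 ^ m, p.2⁆ : G) : G ⧸ N) := by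
        rw [hmkpow, ← hpow p.1 (hW1 p.1 hp.1) p.2 m]
      have h2 : ⁅p.1 ^ m, p.2⁆ ∈ N := by
        rw [hNdef, lcs_succ]
        exact Subgroup.commutator_mem_commutator hmmem (Subgroup.mem_top _)
      exact (QuotientGroup.eq_one_iff _).mp
        (h1.trans ((QuotientGroup.eq_one_iff _).mpr h2))
    · -- generation
      refine le_trans (le_of_eq (lcs_succ i)) (Subgroup.commutator_le.mpr ?_)
      intro y hy g _
      have hmk := claim y hy g
      have hEmap : E = Subgroup.map (QuotientGroup.mk' N) (Subgroup.closure (W' : Set G)) := by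
        rw [MonoidHom.map_closure]
        rfl
      rw [hEmap, Subgroup.mem_map] at hmk
      obtain ⟨k, hk, hke⟩ := hmk
      have hkN : k⁻¹ * ⁅y, g⁆ ∈ N := QuotientGroup.eq.mp hke
      have hdec : ⁅y, g⁆ = k * (k⁻¹ * ⁅y, g⁆) := by group
      rw [hdec]
      exact mul_mem
        ((le_sup_left : Subgroup.closure (W' : Set G) ≤ _ ⊔ (⊤ : Subgroup G).lowerCentralSeries (i + 1 + 1)) hk)
        ((le_sup_right : (⊤ : Subgroup G).lowerCentralSeries (i + 1 + 1) ≤ _) hkN)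

theorem finite_of_torsion_gens : ∀ (n : ℕ) (G : Type u) [Group G],
    (⊤ : Subgroup G).lowerCentralSeries n = ⊥ → ∀ S : Finset G, Subgroup.closure (S : Set G) = ⊤ →
    (∀ x ∈ S, IsOfFinOrder x) → Finite G := by
  intro n
  induction n with
  | zero =>
    intro G _ h S _ _
    have hall : ∀ x : G, x = 1 := fun x => by
      have hx : x ∈ (⊥ : Subgroup G) := h ▸ Subgroup.mem_top x
      exact Subgroup.mem_bot.mp hx
    haveI : Subsingleton G := ⟨fun x y => by rw [hall x, hall y]⟩
    exact Finite.of_subsingleton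
  | succ n IH =>
    intro G _ h S hSgen hStor
    classical
    have hZcen : ∀ z ∈ (⊤ : Subgroup G).lowerCentralSeries n, ∀ g : G, z * g = g * z := by
      intro z hz g
      have : ⁅z, g⁆ ∈ (⊤ : Subgroup G).lowerCentralSeries (n + 1) := by
        rw [lcs_succ]
        exact Subgroup.commutator_mem_commutator hz (Subgroup.mem_top _)
      rw [h, Subgroup.mem_bot] at this
      have h2 : z * g * g⁻¹ * z⁻¹ * (z * g) = z * g := by group
      calc z * g = ⁅z, g⁆ * (g * z) := by simp only [commutatorElement_def]; group
        _ = g * z := by rw [this, one_mul]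
    have hquot : (⊤ : Subgroup (G ⧸ (⊤ : Subgroup G).lowerCentralSeries n)).lowerCentralSeries n = ⊥ := by
      rw [← map_lcs_surjective (QuotientGroup.mk' _) (QuotientGroup.mk'_surjective _) n,
        Subgroup.map_eq_bot_iff, QuotientGroup.ker_mk']
    haveI hfinQ : Finite (G ⧸ (⊤ : Subgroup G).lowerCentralSeries n) := by
      refine IH _ hquot (S.image (QuotientGroup.mk' _)) ?_ ?_
      · rw [Finset.coe_image, ← MonoidHom.map_closure, hSgen,
          Subgroup.map_top_of_surjective _ (QuotientGroup.mk'_surjective _)]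
      · intro x hx
        rw [Finset.mem_image] at hx
        obtain ⟨y, hy, rfl⟩ := hx
        exact (QuotientGroup.mk' _).isOfFinOrder (hStor y hy)
    obtain ⟨W, hW1, hW2, hW3⟩ := chain_exists S hSgen hStor n
    have hWcen : ∀ w ∈ W, w ∈ Subgroup.center G := fun w hw =>
      Subgroup.mem_center_iff.mpr (fun g => (hZcen w (hW1 w hw) g).symm)
    have hWtor : ∀ w ∈ W, IsOfFinOrder w := by
      intro w hw
      obtain ⟨m, hm, hmem⟩ := hW2 w hw
      rw [h, Subgroup.mem_bot] at hmem
      exact isOfFinOrder_iff_pow_eq_one.mpr ⟨m, hm, hmem⟩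
    have hZle : (⊤ : Subgroup G).lowerCentralSeries n ≤ Subgroup.closure (W : Set G) := by
      have h3 := hW3
      rw [h, sup_bot_eq] at h3
      exact h3
    have hfin1 : ((Subgroup.closure (W : Set G) : Subgroup G) : Set G).Finite :=
      finite_closure_central_torsion W hWcen hWtor
    haveI hfinZ : Finite ((⊤ : Subgroup G).lowerCentralSeries n) :=
      (hfin1.subset (fun x hx => hZle hx)).to_subtype
    exact Finite.of_equiv _
      (Subgroup.groupEquivQuotientProdSubgroup (s := (⊤ : Subgroup G).lowerCentralSeries n)).symm

theorem tors_mul {n : ℕ} (h : (⊤ : Subgroup G).lowerCentralSeries n = ⊥) {a b : G}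
    (ha : IsOfFinOrder a) (hb : IsOfFinOrder b) : IsOfFinOrder (a * b) := by
  classical
  have haH : a ∈ Subgroup.closure ({a, b} : Set G) := Subgroup.subset_closure (by simp)
  have hbH : b ∈ Subgroup.closure ({a, b} : Set G) := Subgroup.subset_closure (by simp)
  have hnil : (⊤ : Subgroup (Subgroup.closure ({a, b} : Set G))).lowerCentralSeries n = ⊥ := by
    rw [eq_bot_iff]
    intro x hx
    have hmem : (x : G) ∈ (⊤ : Subgroup G).lowerCentralSeries n :=
      Subgroup.lowerCentralSeries_map_subtype_le _ n ⟨x, hx, rfl⟩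
    rw [h, Subgroup.mem_bot] at hmem
    rw [Subgroup.mem_bot]
    exact Subtype.ext hmem
  have htorsub : ∀ (c : G) (hc : c ∈ Subgroup.closure ({a, b} : Set G)), IsOfFinOrder c →
      IsOfFinOrder (⟨c, hc⟩ : Subgroup.closure ({a, b} : Set G)) := by
    intro c hc hct
    obtain ⟨m, hm, hpow⟩ := isOfFinOrder_iff_pow_eq_one.mp hct
    refine isOfFinOrder_iff_pow_eq_one.mpr ⟨m, hm, ?_⟩
    ext
    simpa using hpow
  haveI hfin : Finite (Subgroup.closure ({a, b} : Set G)) := by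
    refine finite_of_torsion_gens n _ hnil ({⟨a, haH⟩, ⟨b, hbH⟩} : Finset _) ?_ ?_
    · rw [eq_top_iff, ← Subgroup.closure_closure_coe_preimage (k := ({a, b} : Set G))]
      refine Subgroup.closure_mono ?_
      intro x hx
      rcases hx with hx | hx
      · simp only [Finset.coe_insert, Finset.coe_singleton, Set.mem_insert_iff,
          Set.mem_singleton_iff]
        left; exact Subtype.ext hx
      · simp only [Finset.coe_insert, Finset.coe_singleton, Set.mem_insert_iff,
          Set.mem_singleton_iff]
        right; exact Subtype.ext hx
    · intro x hx
      rcases Finset.mem_insert.mp hx with rfl | hx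
      · exact htorsub a haH ha
      · rw [Finset.mem_singleton] at hx
        subst hx
        exact htorsub b hbH hb
  have hab := isOfFinOrder_of_finite
    (⟨a * b, mul_mem haH hbH⟩ : Subgroup.closure ({a, b} : Set G))
  obtain ⟨m, hm, hpow⟩ := isOfFinOrder_iff_pow_eq_one.mp hab
  refine isOfFinOrder_iff_pow_eq_one.mpr ⟨m, hm, ?_⟩
  have := congrArg (Subtype.val) hpow
  simpa using this

/-- Torsion elements of a nilpotent group form a subgroup. -/
def torsionSubgroup (G : Type u) [Group G] {n : ℕ} (h : (⊤ : Subgroup G).lowerCentralSeries n = ⊥) :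
    Subgroup G where
  carrier := {x | IsOfFinOrder x}
  one_mem' := IsOfFinOrder.one
  mul_mem' := fun hx hy => tors_mul h hx hy
  inv_mem' := fun hx => hx.inv

theorem torsionSubgroup_normal {n : ℕ} (h : (⊤ : Subgroup G).lowerCentralSeries n = ⊥) :
    (torsionSubgroup G h).Normal := by
  constructor
  intro x hx g
  have := (MulAut.conj g).toMonoidHom.isOfFinOrder (x := x) hx
  exact (by simpa using this : IsOfFinOrder (g * x * g⁻¹))

end Torsion


section Assembly

variable (A : Type u) [Group A]

/-- Common kernel of all maps to torsion-free nilpotent groups of class ≤ n. -/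
def resKernel (n : ℕ) : Subgroup A where
  carrier := {y | ∀ (H : Type u) (_ : Group H) (f : A →* H),
    (⊤ : Subgroup H).lowerCentralSeries n = ⊥ → Monoid.IsTorsionFree H → f y = 1}
  one_mem' := fun H _ f _ _ => map_one f
  mul_mem' := by
    intro y z hy hz H instH f h1 h2
    rw [map_mul, hy H instH f h1 h2, hz H instH f h1 h2, one_mul]
  inv_mem' := by
    intro y hy H instH f h1 h2
    rw [map_inv, hy H instH f h1 h2, inv_one]

instance resKernel_normal (n : ℕ) : (resKernel A n).Normal := by
  constructor
  intro y hy g H instH f h1 h2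
  rw [map_mul, map_mul, hy H instH f h1 h2, mul_one, map_inv, mul_inv_cancel]

variable {A}

theorem lcs_le_resKernel (n : ℕ) : (⊤ : Subgroup A).lowerCentralSeries n ≤ resKernel A n := by
  intro y hy H instH f h1 h2
  have hm : f y ∈ (⊤ : Subgroup H).lowerCentralSeries n := Subgroup.lowerCentralSeries.map f n ⟨y, hy, rfl⟩
  rwa [h1, Subgroup.mem_bot] at hm

theorem resQuot_lcs (n : ℕ) : (⊤ : Subgroup (A ⧸ resKernel A n)).lowerCentralSeries n = ⊥ := by
  rw [← map_lcs_surjective (QuotientGroup.mk' _) (QuotientGroup.mk'_surjective _) n,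
    Subgroup.map_eq_bot_iff, QuotientGroup.ker_mk']
  exact lcs_le_resKernel n

theorem resQuot_tf (n : ℕ) : Monoid.IsTorsionFree (A ⧸ resKernel A n) := by
  intro x hx1 hx2
  induction x using QuotientGroup.induction_on with
  | _ z =>
    obtain ⟨m, hm, hpow⟩ := isOfFinOrder_iff_pow_eq_one.mp hx2
    have hzm : z ^ m ∈ resKernel A n := by
      rw [← QuotientGroup.eq_one_iff]
      rw [show ((z ^ m : A) : A ⧸ resKernel A n) = (((z : A) : A ⧸ resKernel A n)) ^ m from
        map_pow (QuotientGroup.mk' _) z m]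
      exact hpow
    apply hx1
    rw [QuotientGroup.eq_one_iff]
    intro H instH f h1 h2
    by_contra hfz
    have hfm : (f z) ^ m = 1 := by
      rw [← map_pow]
      exact hzm H instH f h1 h2
    exact h2 (f z) hfz (isOfFinOrder_iff_pow_eq_one.mpr ⟨m, hm, hfm⟩)

theorem resKernel_map_eq (n : ℕ) (e : A ≃* A) :
    Subgroup.map (e : A →* A) (resKernel A n) = resKernel A n := by
  apply le_antisymm
  · rintro _ ⟨y, hy, rfl⟩
    intro H instH f h1 h2
    exact hy H instH (f.comp (e : A →* A)) h1 h2
  · intro y hy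
    refine ⟨e.symm y, ?_, by simp⟩
    intro H instH f h1 h2
    exact hy H instH (f.comp (e.symm : A →* A)) h1 h2

variable {C : Type u} [Group C]

/-- The induced action on the quotient by the common kernel. -/
def phiBar (n : ℕ) (φ : C →* MulAut A) : C →* MulAut (A ⧸ resKernel A n) where
  toFun c := QuotientGroup.congr (resKernel A n) (resKernel A n) (φ c) (resKernel_map_eq n (φ c))
  map_one' := by
    ext x
    induction x using QuotientGroup.induction_on with
    | _ z => simp [QuotientGroup.congr_mk]
  map_mul' c d := by
    ext x
    induction x using QuotientGroup.induction_on with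
    | _ z => simp [QuotientGroup.congr_mk, MulAut.mul_apply]

theorem phiBar_mk (n : ℕ) (φ : C →* MulAut A) (c : C) (z : A) :
    phiBar n φ c ((z : A ⧸ resKernel A n)) = ((φ c z : A) : A ⧸ resKernel A n) :=
  QuotientGroup.congr_mk (resKernel A n) (resKernel A n) (φ c) (resKernel_map_eq n (φ c)) z

end Assembly

end AlmostDirect

open AlmostDirect in
/-- An almost-direct product of two residually torsion-free nilpotent groups is
residually torsion-free nilpotent. -/
theorem stmt5 (A C : Type u) [Group A] [Group C] (φ : C →* MulAut A)
    (h : ∀ (c : C) (a : A), Abelianization.of (φ c a) = Abelianization.of a)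
    (hA : ∀ x : A, x ≠ 1 → ∃ (H : Type u) (_ : Group H) (f : A →* H),
      Group.IsNilpotent H ∧ Monoid.IsTorsionFree H ∧ f x ≠ 1)
    (hC : ∀ x : C, x ≠ 1 → ∃ (H : Type u) (_ : Group H) (f : C →* H),
      Group.IsNilpotent H ∧ Monoid.IsTorsionFree H ∧ f x ≠ 1) :
    ∀ x : A ⋊[φ] C, x ≠ 1 → ∃ (H : Type u) (_ : Group H) (f : (A ⋊[φ] C) →* H),
      Group.IsNilpotent H ∧ Monoid.IsTorsionFree H ∧ f x ≠ 1 := by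
  intro x hx
  by_cases hr : x.right = 1
  · -- hard case : x = inl (x.left)
    have ha : x.left ≠ 1 := by
      intro hl
      exact hx (SemidirectProduct.ext hl hr)
    obtain ⟨H₀, instH₀, f₀, hnil₀, htf₀, hf₀⟩ := hA x.left ha
    obtain ⟨n, hn⟩ := Subgroup.nilpotent_iff_lowerCentralSeries.mp hnil₀
    set K := resKernel A n with hK
    haveI : K.Normal := resKernel_normal A n
    set φ' := phiBar n φ with hφ'
    set ψC := QuotientGroup.kerLift φ' with hψC
    have htriv : ∀ (c' : C ⧸ φ'.ker) (q : A ⧸ K),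
        q⁻¹ * ψC c' q ∈ (⊤ : Subgroup (A ⧸ K)).lowerCentralSeries 1 := by
      intro c' q
      induction c' using QuotientGroup.induction_on with
      | _ c =>
        induction q using QuotientGroup.induction_on with
        | _ z =>
          have h1 : ψC ((c : C ⧸ φ'.ker)) ((z : A ⧸ K)) = ((φ c z : A) : A ⧸ K) := by
            rw [hψC, QuotientGroup.kerLift_mk]
            exact phiBar_mk n φ c z
          rw [h1]
          have h2 : z⁻¹ * φ c z ∈ commutator A := by
            have h3 : ((z : A ⧸ commutator A)) = ((φ c z : A) : A ⧸ commutator A) :=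
              (h c z).symm
            exact QuotientGroup.eq.mp h3
          have h4 : (((z⁻¹ * φ c z : A)) : A ⧸ K) ∈ (⊤ : Subgroup (A ⧸ K)).lowerCentralSeries 1 := by
            refine Subgroup.lowerCentralSeries.map (QuotientGroup.mk' K) 1 ⟨z⁻¹ * φ c z, ?_, rfl⟩
            exact h2
          simpa [QuotientGroup.mk_mul, QuotientGroup.mk_inv] using h4
    have hnilT : Group.IsNilpotent ((A ⧸ K) ⋊[ψC] (C ⧸ φ'.ker)) :=
      sd_nilpotent ψC (QuotientGroup.kerLift_injective φ') n (resQuot_lcs n) htriv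
    obtain ⟨N, hN⟩ := Subgroup.nilpotent_iff_lowerCentralSeries.mp hnilT
    haveI hτn : (torsionSubgroup _ hN).Normal := torsionSubgroup_normal hN
    have hcompat : ∀ g : C, (QuotientGroup.mk' K).comp (φ g).toMonoidHom =
        (ψC ((g : C ⧸ φ'.ker))).toMonoidHom.comp (QuotientGroup.mk' K) := by
      intro g
      ext z
      show ((φ g z : A) : A ⧸ K) = ψC ((g : C ⧸ φ'.ker)) ((z : A ⧸ K))
      rw [hψC, QuotientGroup.kerLift_mk]
      exact (phiBar_mk n φ g z).symm
    set ψ := SemidirectProduct.map (QuotientGroup.mk' K) (QuotientGroup.mk' φ'.ker) hcompat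
      with hψ
    refine ⟨_, _, (QuotientGroup.mk' (torsionSubgroup _ hN)).comp ψ, ?_, ?_, ?_⟩
    · rw [Subgroup.nilpotent_iff_lowerCentralSeries]
      refine ⟨N, ?_⟩
      rw [← map_lcs_surjective (QuotientGroup.mk' (torsionSubgroup _ hN))
        (QuotientGroup.mk'_surjective _) N, hN, Subgroup.map_bot]
    · intro t ht1 ht2
      induction t using QuotientGroup.induction_on with
      | _ w =>
        obtain ⟨m, hm, hpow⟩ := isOfFinOrder_iff_pow_eq_one.mp ht2
        have hwm : w ^ m ∈ torsionSubgroup _ hN := by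
          rw [← QuotientGroup.eq_one_iff,
            show ((w ^ m : _) : _ ⧸ torsionSubgroup _ hN) = (((w : _) : _ ⧸ torsionSubgroup _ hN)) ^ m from
              map_pow (QuotientGroup.mk' _) w m]
          exact hpow
        obtain ⟨k, hk, hk1⟩ := isOfFinOrder_iff_pow_eq_one.mp hwm
        apply ht1
        rw [QuotientGroup.eq_one_iff]
        exact isOfFinOrder_iff_pow_eq_one.mpr
          ⟨m * k, Nat.mul_pos hm hk, by rw [pow_mul]; exact hk1⟩
    · have hq0 : ((x.left : A) : A ⧸ K) ≠ 1 := by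
        rw [Ne, QuotientGroup.eq_one_iff]
        intro hmem
        exact hf₀ (hmem H₀ instH₀ f₀ hn htf₀)
      have hψx : ψ x = SemidirectProduct.inl ((x.left : A ⧸ K)) := by
        refine SemidirectProduct.ext ?_ ?_
        · rfl
        · show ((x.right : C) : C ⧸ φ'.ker) = 1
          rw [hr, QuotientGroup.mk_one]
      intro hcon
      rw [MonoidHom.comp_apply] at hcon
      have hfin : IsOfFinOrder (ψ x) := (QuotientGroup.eq_one_iff (ψ x)).mp hcon
      rw [hψx] at hfin
      obtain ⟨m, hm, hpow⟩ := isOfFinOrder_iff_pow_eq_one.mp hfin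
      rw [← map_pow] at hpow
      have hq0m : ((x.left : A ⧸ K)) ^ m = 1 :=
        SemidirectProduct.inl_injective (hpow.trans (map_one SemidirectProduct.inl).symm)
      exact resQuot_tf n _ hq0 (isOfFinOrder_iff_pow_eq_one.mpr ⟨m, hm, hq0m⟩)
  · obtain ⟨H, instH, f, hnil, htf, hfx⟩ := hC x.right hr
    exact ⟨H, instH, f.comp SemidirectProduct.rightHom, hnil, htf, hfx⟩
end

section
/- Every free group is residually torsion-free nilpotent. -/
universe u

namespace Stmt6Aux

variable {α : Type u}

open Classical in
noncomputable def consBlock (p : α × Bool) : List (α × Bool × ℕ) → List (α × Bool × ℕ)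
  | [] => [(p.1, p.2, 1)]
  | q :: r =>
    if p.1 = q.1 ∧ p.2 = q.2.1 then (p.1, p.2, q.2.2 + 1) :: r
    else (p.1, p.2, 1) :: q :: r

noncomputable def blocks : List (α × Bool) → List (α × Bool × ℕ)
  | [] => []
  | p :: l => consBlock p (blocks l)

theorem blocks_cons (p : α × Bool) (l : List (α × Bool)) :
    blocks (p :: l) = consBlock p (blocks l) := rfl

theorem consBlock_head (p : α × Bool) (L : List (α × Bool × ℕ)) :
    ∃ n r, consBlock p L = (p.1, p.2, n) :: r := by
  rcases L with _ | ⟨q, r⟩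
  · exact ⟨1, [], rfl⟩
  · rw [consBlock]
    split_ifs
    · exact ⟨q.2.2 + 1, r, rfl⟩
    · exact ⟨1, q :: r, rfl⟩

theorem blocks_eq_nil_iff {l : List (α × Bool)} : blocks l = [] ↔ l = [] := by
  constructor
  · intro h
    cases l with
    | nil => rfl
    | cons p l =>
      obtain ⟨n, r, hr⟩ := consBlock_head p (blocks l)
      rw [blocks_cons, hr] at h; simp at h
  · rintro rfl; rfl

theorem blocks_count_pos {l : List (α × Bool)} : ∀ q ∈ blocks l, 1 ≤ q.2.2 := by
  induction l with
  | nil => simp [blocks]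
  | cons p l ih =>
    intro q hq
    rw [blocks_cons] at hq
    rcases h : blocks l with _ | ⟨q', r⟩ <;> rw [h] at hq
    · rw [consBlock] at hq
      simp at hq; subst hq; simp
    · rw [consBlock] at hq
      split_ifs at hq
      · rcases List.mem_cons.mp hq with hq | hq
        · subst hq; simp
        · exact ih q (by rw [h]; exact List.mem_cons_of_mem _ hq)
      · rcases List.mem_cons.mp hq with hq | hq
        · subst hq; simp
        · exact ih q (by rw [h]; exact hq)

theorem blocks_chain {l : List (α × Bool)}
    (h : l.Chain' fun p q => p.1 = q.1 → p.2 = q.2) :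
    (blocks l).Chain' fun x y => x.1 ≠ y.1 := by
  induction l with
  | nil => simp [blocks, List.Chain']
  | cons p l ih =>
    rw [blocks_cons]
    rcases l with _ | ⟨p', l'⟩
    · simp [blocks, consBlock, List.Chain']
    · obtain ⟨hrel, hch⟩ := List.isChain_cons_cons.mp h
      have ihc := ih hch
      obtain ⟨n, r, hq⟩ := consBlock_head p' (blocks l')
      rw [← blocks_cons] at hq
      rw [hq] at ihc ⊢
      rw [consBlock]
      split_ifs with hc
      · simp only [List.Chain', List.isChain_cons] at ihc ⊢
        refine ⟨?_, ihc.2⟩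
        intro b hb
        have := ihc.1 b hb
        simpa [hc.1] using this
      · simp only [List.Chain', List.isChain_cons_cons]
        exact ⟨fun heq => hc ⟨heq, hrel heq⟩, ihc⟩

noncomputable def bexp (q : α × Bool × ℕ) : ℤ := if q.2.1 then (q.2.2 : ℤ) else -(q.2.2 : ℤ)

theorem bexp_ne_zero {l : List (α × Bool)} {q : α × Bool × ℕ} (hq : q ∈ blocks l) :
    bexp q ≠ 0 := by
  have h1 := blocks_count_pos q hq
  rcases q with ⟨a, b, n⟩
  have hn : 1 ≤ n := h1
  cases b <;> simp [bexp] <;> omega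

theorem mk_single (a : α) (b : Bool) :
    FreeGroup.mk [(a, b)] = FreeGroup.of a ^ (if b then (1 : ℤ) else -1) := by
  cases b
  · have h1 : (FreeGroup.of a)⁻¹ = FreeGroup.mk [(a, false)] := by
      rw [show FreeGroup.of a = FreeGroup.mk [(a, true)] from rfl, FreeGroup.inv_mk]
      simp [FreeGroup.invRev]
    simp [← h1]
  · simp [show FreeGroup.of a = FreeGroup.mk [(a, true)] from rfl]

theorem blocks_prod (l : List (α × Bool)) :
    FreeGroup.mk l = ((blocks l).map fun q => FreeGroup.of q.1 ^ bexp q).prod := by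
  induction l with
  | nil => rw [show blocks ([] : List (α × Bool)) = [] from rfl]; simp [FreeGroup.one_eq_mk]
  | cons p l ih =>
    have hsplit : FreeGroup.mk (p :: l) = FreeGroup.mk [p] * FreeGroup.mk l := by
      rw [FreeGroup.mul_mk]; rfl
    have hp : FreeGroup.mk [p] = FreeGroup.of p.1 ^ (if p.2 then (1 : ℤ) else -1) := by
      rw [← mk_single p.1 p.2]
    rw [blocks_cons]
    rcases hb : blocks l with _ | ⟨q, r⟩
    · have hl : l = [] := blocks_eq_nil_iff.mp hb
      subst hl
      rw [show consBlock p ([] : List (α × Bool × ℕ)) = [(p.1, p.2, 1)] from rfl]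
      simp only [List.map_cons, List.map_nil, List.prod_cons, List.prod_nil, mul_one]
      rw [hsplit, ← FreeGroup.one_eq_mk, mul_one, hp]
      congr 1
    · rw [hb] at ih
      rw [consBlock]
      split_ifs with hc
      · simp only [List.map_cons, List.prod_cons] at ih ⊢
        have heq : (if p.2 then (1 : ℤ) else -1) + bexp q = bexp (p.1, p.2, q.2.2 + 1) := by
          rcases q with ⟨a, b, n⟩
          obtain ⟨hc1, hc2⟩ := hc
          simp only at hc1 hc2
          subst hc2
          cases p.2 <;> simp [bexp] <;> push_cast <;> ring
        rw [hsplit, ih, hp, ← mul_assoc, hc.1, ← zpow_add, ← hc.1, heq]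
      · simp only [List.map_cons, List.prod_cons] at ih ⊢
        rw [hsplit, ih, hp]
        congr 1



variable {m : ℕ}

/-- entries vanish below the `d`-th superdiagonal -/
def SD (d : ℕ) (A : Matrix (Fin (m + 1)) (Fin (m + 1)) ℤ) : Prop :=
  ∀ i j : Fin (m + 1), (j : ℕ) < (i : ℕ) + d → A i j = 0

namespace SD

variable {d e : ℕ} {A B : Matrix (Fin (m + 1)) (Fin (m + 1)) ℤ}

theorem mono (hde : d ≤ e) (h : SD e A) : SD d A :=
  fun i j hij => h i j (lt_of_lt_of_le hij (by omega))

theorem zero : SD d (0 : Matrix (Fin (m + 1)) (Fin (m + 1)) ℤ) := fun _ _ _ => rfl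

theorem add (hA : SD d A) (hB : SD d B) : SD d (A + B) := fun i j hij => by
  rw [Matrix.add_apply, hA i j hij, hB i j hij, add_zero]

theorem neg (hA : SD d A) : SD d (-A) := fun i j hij => by
  rw [Matrix.neg_apply, hA i j hij, neg_zero]

theorem sub (hA : SD d A) (hB : SD d B) : SD d (A - B) := fun i j hij => by
  rw [Matrix.sub_apply, hA i j hij, hB i j hij, sub_zero]

theorem nsmul (hA : SD d A) (n : ℕ) : SD d (n • A) := fun i j hij => by
  rw [Matrix.smul_apply, hA i j hij, smul_zero]

theorem zsmul (hA : SD d A) (n : ℤ) : SD d (n • A) := fun i j hij => by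
  rw [Matrix.smul_apply, hA i j hij, smul_zero]

theorem listSum {L : List (Matrix (Fin (m + 1)) (Fin (m + 1)) ℤ)}
    (h : ∀ X ∈ L, SD d X) : SD d L.sum := by
  induction L with
  | nil => exact zero
  | cons X L ih =>
    rw [List.sum_cons]
    exact (h X List.mem_cons_self).add (ih fun Y hY => h Y (List.mem_cons_of_mem _ hY))

theorem finsetSum {s : Finset ℕ} {f : ℕ → Matrix (Fin (m + 1)) (Fin (m + 1)) ℤ}
    (h : ∀ t ∈ s, SD d (f t)) : SD d (∑ t ∈ s, f t) := fun i j hij => by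
  rw [Matrix.sum_apply]
  exact Finset.sum_eq_zero fun t ht => h t ht i j hij

theorem mul (hA : SD d A) (hB : SD e B) : SD (d + e) (A * B) := by
  intro i j hij
  rw [Matrix.mul_apply]
  apply Finset.sum_eq_zero
  intro k _
  by_cases hk : (k : ℕ) < (i : ℕ) + d
  · rw [hA i k hk, zero_mul]
  · rw [hB k j (by omega), mul_zero]

theorem one_zero : SD 0 (1 : Matrix (Fin (m + 1)) (Fin (m + 1)) ℤ) := by
  intro i j hij
  exact Matrix.one_apply_ne (by omega : i ≠ j)

theorem pow_le (hd : 1 ≤ d) (hA : SD d A) : ∀ t, 1 ≤ t → SD d (A ^ t) := by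
  intro t
  induction t with
  | zero => omega
  | succ t ih =>
    intro _
    rcases Nat.eq_or_lt_of_le (Nat.one_le_iff_ne_zero.mpr (Nat.succ_ne_zero t) : 1 ≤ t + 1) with h1 | h1
    · rw [← h1, pow_one]; exact hA
    · have ht : 1 ≤ t := by omega
      rw [pow_succ]
      exact mono (by omega) ((ih ht).mul hA)

theorem pow_deg (hA : SD 1 A) : ∀ t, SD t (A ^ t) := by
  intro t
  induction t with
  | zero => rw [pow_zero]; exact one_zero
  | succ t ih => rw [pow_succ]; exact ih.mul hA

theorem eq_zero (h : SD (m + 1) A) : A = 0 := by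
  ext i j
  rw [h i j (by omega), Matrix.zero_apply]

end SD

/-- the inverse of a unitriangular unit is unitriangular to the same degree -/
theorem inv_SD {u : (Matrix (Fin (m + 1)) (Fin (m + 1)) ℤ)ˣ}
    (h1 : SD 1 ((u : Matrix (Fin (m + 1)) (Fin (m + 1)) ℤ) - 1)) {d : ℕ} (hd1 : 1 ≤ d)
    (hd : SD d ((u : Matrix (Fin (m + 1)) (Fin (m + 1)) ℤ) - 1)) :
    SD d (((u⁻¹ : _ˣ) : Matrix (Fin (m + 1)) (Fin (m + 1)) ℤ) - 1) := by
  set A : Matrix (Fin (m + 1)) (Fin (m + 1)) ℤ := (u : Matrix (Fin (m + 1)) (Fin (m + 1)) ℤ) - 1 with hA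
  have hu : (u : Matrix (Fin (m + 1)) (Fin (m + 1)) ℤ) = 1 + A := by rw [hA]; abel
  have hstep : ∀ t : ℕ, (u : Matrix (Fin (m + 1)) (Fin (m + 1)) ℤ) * (-A) ^ t
      = (-A) ^ t - (-A) ^ (t + 1) := by
    intro t
    rw [hu, add_mul, one_mul, pow_succ', neg_mul]
    abel
  have key : (u : Matrix (Fin (m + 1)) (Fin (m + 1)) ℤ) *
      (∑ t ∈ Finset.range (m + 2), (-A) ^ t) = 1 := by
    rw [Finset.mul_sum]
    simp_rw [hstep]
    rw [Finset.sum_range_sub']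
    have hz : (-A) ^ (m + 2) = 0 := by
      have : SD (m + 2) ((-A) ^ (m + 2)) := SD.pow_deg h1.neg (m + 2)
      exact (this.mono (by omega)).eq_zero
    rw [hz, pow_zero, sub_zero]
  have hinv : ((u⁻¹ : _ˣ) : Matrix (Fin (m + 1)) (Fin (m + 1)) ℤ)
      = ∑ t ∈ Finset.range (m + 2), (-A) ^ t := by
    calc ((u⁻¹ : _ˣ) : Matrix (Fin (m + 1)) (Fin (m + 1)) ℤ)
        = ((u⁻¹ : _ˣ) : Matrix (Fin (m + 1)) (Fin (m + 1)) ℤ) *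
          ((u : Matrix (Fin (m + 1)) (Fin (m + 1)) ℤ) *
            (∑ t ∈ Finset.range (m + 2), (-A) ^ t)) := by rw [key, mul_one]
      _ = (((u⁻¹ : _ˣ) : Matrix (Fin (m + 1)) (Fin (m + 1)) ℤ) *
            (u : Matrix (Fin (m + 1)) (Fin (m + 1)) ℤ)) *
            (∑ t ∈ Finset.range (m + 2), (-A) ^ t) := (mul_assoc _ _ _).symm
      _ = ∑ t ∈ Finset.range (m + 2), (-A) ^ t := by
            rw [← Units.val_mul, inv_mul_cancel, Units.val_one, one_mul]
  rw [hinv]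
  have hsum : (∑ t ∈ Finset.range (m + 2), (-A) ^ t) - 1
      = ∑ t ∈ Finset.range (m + 1), (-A) ^ (t + 1) := by
    rw [Finset.sum_range_succ']
    simp
  rw [hsum]
  exact SD.finsetSum fun t _ => hd.neg.pow_le hd1 (t + 1) (by omega)

/-- abbreviation for the matrix ring -/
abbrev RM (m : ℕ) := Matrix (Fin (m + 1)) (Fin (m + 1)) ℤ

/-- the group of unitriangular units -/
def HU (m : ℕ) : Subgroup (RM m)ˣ where
  carrier := {u | SD 1 ((u : RM m) - 1)}
  one_mem' := by
    show SD 1 (((1 : (RM m)ˣ) : RM m) - 1)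
    rw [Units.val_one, sub_self]
    exact SD.zero
  mul_mem' := by
    intro u v hu hv
    show SD 1 (((u * v : (RM m)ˣ) : RM m) - 1)
    have hexp : ((u * v : (RM m)ˣ) : RM m) - 1
        = ((u : RM m) - 1) * ((v : RM m) - 1) + (((u : RM m) - 1) + ((v : RM m) - 1)) := by
      rw [Units.val_mul]; noncomm_ring
    rw [hexp]
    exact ((hu.mul hv).mono (by omega)).add (hu.add hv)
  inv_mem' := by
    intro u hu
    exact inv_SD hu le_rfl hu

theorem mem_HU_iff {m : ℕ} {u : (RM m)ˣ} : u ∈ HU m ↔ SD 1 ((u : RM m) - 1) := Iff.rfl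

/-- value in the big matrix ring of an element of `HU m` -/
def mval {m : ℕ} (g : ↥(HU m)) : RM m := ((g : (RM m)ˣ) : RM m)

theorem mval_mul {m : ℕ} (g h : ↥(HU m)) : mval (g * h) = mval g * mval h := rfl

theorem mval_one {m : ℕ} : mval (1 : ↥(HU m)) = 1 := rfl

theorem mval_pow {m : ℕ} (g : ↥(HU m)) (k : ℕ) : mval g ^ k = mval (g ^ k) := by
  induction k with
  | zero => rw [pow_zero, pow_zero, mval_one]
  | succ k ihk => rw [pow_succ, pow_succ, mval_mul, ihk]

theorem mval_eq_one_iff {m : ℕ} {g : ↥(HU m)} : mval g = 1 ↔ g = 1 := by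
  constructor
  · intro h
    have h1 : (g : (RM m)ˣ) = 1 := Units.ext h
    exact Subtype.ext h1
  · rintro rfl; rfl

theorem mval_inv_sub_one {m : ℕ} (g : ↥(HU m)) {d : ℕ} (hd1 : 1 ≤ d)
    (hd : SD d (mval g - 1)) : SD d (mval g⁻¹ - 1) := by
  have : mval g⁻¹ = (((g : (RM m)ˣ)⁻¹ : (RM m)ˣ) : RM m) := rfl
  rw [this]
  exact inv_SD g.2 hd1 hd

/-- the subgroups bounding the lower central series -/
def KU (m c : ℕ) : Subgroup ↥(HU m) where
  carrier := {g | SD (c + 1) (mval g - 1)}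
  one_mem' := by
    show SD (c + 1) (mval (1 : ↥(HU m)) - 1)
    rw [mval_one, sub_self]
    exact SD.zero
  mul_mem' := by
    intro u v hu hv
    show SD (c + 1) (mval (u * v) - 1)
    have hexp : mval (u * v) - 1
        = (mval u - 1) * (mval v - 1) + ((mval u - 1) + (mval v - 1)) := by
      rw [mval_mul]; noncomm_ring
    exact hexp ▸ (((hu.mul hv).mono (by omega)).add (hu.add hv))
  inv_mem' := by
    intro u hu
    exact mval_inv_sub_one u (by omega) hu

theorem mem_KU_iff {m c : ℕ} {g : ↥(HU m)} : g ∈ KU m c ↔ SD (c + 1) (mval g - 1) := Iff.rfl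

theorem lcs_le_KU (m : ℕ) : ∀ c, Subgroup.lowerCentralSeries (⊤ : Subgroup ↥(HU m)) c ≤ KU m c := by
  intro c
  induction c with
  | zero =>
    intro g _
    exact g.2
  | succ c ih =>
    rw [lowerCentralSeries_succ]
    rw [Subgroup.commutator_def, Subgroup.closure_le]
    rintro x ⟨p, hp, q, -, rfl⟩
    have hpK : SD (c + 1) (mval p - 1) := ih hp
    have hqK : SD 1 (mval q - 1) := q.2
    show p * q * p⁻¹ * q⁻¹ ∈ KU m (c + 1)
    rw [mem_KU_iff]
    have hw : p * q * p⁻¹ * q⁻¹ = (p * q) * (q * p)⁻¹ := by group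
    rw [hw]
    set A : RM m := mval p - 1
    set B : RM m := mval q - 1
    have hvu : (q * p) * ((q * p)⁻¹) = 1 := mul_inv_cancel _
    have hkey : mval ((p * q) * (q * p)⁻¹) - 1
        = (mval (p * q) - mval (q * p)) * mval ((q * p)⁻¹) := by
      have e1 : mval ((p * q) * (q * p)⁻¹) = mval (p * q) * mval ((q * p)⁻¹) := mval_mul _ _
      have e2 : mval (q * p) * mval ((q * p)⁻¹) = 1 := by rw [← mval_mul, hvu, mval_one]
      rw [e1, sub_mul, e2]
    rw [hkey]
    have hAB : mval (p * q) - mval (q * p) = A * B - B * A := by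
      rw [mval_mul, mval_mul]
      show mval p * mval q - mval q * mval p = _
      have hp1 : mval p = 1 + A := by rw [show A = mval p - 1 from rfl]; abel
      have hq1 : mval q = 1 + B := by rw [show B = mval q - 1 from rfl]; abel
      rw [hp1, hq1]; noncomm_ring
    have hABSD : SD (c + 2) (mval (p * q) - mval (q * p)) := by
      rw [hAB]
      exact (hpK.mul hqK).sub ((hqK.mul hpK).mono (by omega))
    have hCSD : SD 1 (mval ((q * p)⁻¹) - 1) :=
      mval_inv_sub_one (q * p) le_rfl (q * p).2
    have hsplit : (mval (p * q) - mval (q * p)) * mval ((q * p)⁻¹)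
        = (mval (p * q) - mval (q * p))
          + (mval (p * q) - mval (q * p)) * (mval ((q * p)⁻¹) - 1) := by
      noncomm_ring
    rw [hsplit]
    exact hABSD.add ((hABSD.mul hCSD).mono (by omega))

theorem HU_nilpotent (m : ℕ) : Group.IsNilpotent ↥(HU m) := by
  rw [nilpotent_iff_lowerCentralSeries]
  refine ⟨m + 1, ?_⟩
  rw [eq_bot_iff]
  intro g hg
  have h1 : SD (m + 2) (mval g - 1) := lcs_le_KU m (m + 1) hg
  have h2 : mval g - 1 = 0 := (h1.mono (by omega)).eq_zero
  have h3 : mval g = 1 := by rw [← sub_eq_zero]; exact h2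
  rw [Subgroup.mem_bot]
  exact mval_eq_one_iff.mp h3

theorem HU_torsionFree (m : ℕ) : Monoid.IsTorsionFree ↥(HU m) := by
  intro g hg hfo
  classical
  obtain ⟨n, hn, hgn⟩ := isOfFinOrder_iff_pow_eq_one.mp hfo
  set A : RM m := mval g - 1 with hAdef
  have hA1 : SD 1 A := g.2
  have hAne : A ≠ 0 := by
    intro h0
    apply hg
    apply mval_eq_one_iff.mp
    rw [← sub_eq_zero]
    exact h0
  have hex : ∃ d, ¬ SD d A := ⟨m + 1, fun h => hAne h.eq_zero⟩
  have hd0 : ¬ SD (Nat.find hex) A := Nat.find_spec hex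
  have h2le : 2 ≤ Nat.find hex := by
    by_contra hlt
    push_neg at hlt
    exact hd0 (hA1.mono (by omega))
  set d : ℕ := Nat.find hex - 1 with hddef
  have hd1 : 1 ≤ d := by omega
  have hdlt : d < Nat.find hex := by omega
  have hd : SD d A := by
    by_contra hc
    exact Nat.find_min hex hdlt hc
  have hd0' : ¬ SD (d + 1) A := by
    have : d + 1 = Nat.find hex := by omega
    rw [this]; exact hd0
  -- binomial expansion
  have hbin : ∀ t : ℕ, ∃ E : RM m, SD (d + 1) E ∧ (1 + A) ^ t = 1 + t • A + E := by
    intro t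
    induction t with
    | zero => exact ⟨0, SD.zero, by simp⟩
    | succ t ih =>
      obtain ⟨E, hE, hEq⟩ := ih
      refine ⟨t • (A * A) + (E + E * A), ?_, ?_⟩
      · exact (((hd.mul hd).mono (by omega)).nsmul t).add
          (hE.add ((hE.mul hd).mono (by omega)))
      · rw [pow_succ, hEq]
        simp only [nsmul_eq_mul]
        push_cast
        noncomm_ring
  obtain ⟨E, hE, hEq⟩ := hbin n
  have hval : ((1 : RM m) + A) ^ n = 1 := by
    have h1 : (1 : RM m) + A = mval g := by rw [hAdef]; abel
    rw [h1, mval_pow, hgn, mval_one]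
  have h0 : (n • A : RM m) + E = 0 := by
    have h1 : (1 : RM m) + (n • A + E) = 1 := by
      rw [← add_assoc, ← hEq, hval]
    calc (n • A : RM m) + E = ((1 : RM m) + (n • A + E)) - 1 := by abel
      _ = 0 := by rw [h1]; abel
  simp only [SD, not_forall] at hd0'
  obtain ⟨i, j, hij, hAij⟩ := hd0'
  apply hAij
  have h2 : (n • A + E) i j = 0 := by rw [h0, Matrix.zero_apply]
  rw [Matrix.add_apply, Matrix.smul_apply, hE i j hij, add_zero, nsmul_eq_mul] at h2
  have hn' : (n : ℤ) ≠ 0 := by exact_mod_cast Nat.pos_iff_ne_zero.mp hn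
  exact (mul_eq_zero.mp h2).resolve_left hn'


section Magnus

variable {α : Type u}

theorem unit_inv_val {M : Type*} [Ring M] (w : Mˣ) (C : M) (h : (w : M) * C = 1) :
    ((w⁻¹ : Mˣ) : M) = C := by
  calc ((w⁻¹ : Mˣ) : M) = ((w⁻¹ : Mˣ) : M) * ((w : M) * C) := by rw [h, mul_one]
    _ = (((w⁻¹ : Mˣ) : M) * (w : M)) * C := (mul_assoc _ _ _).symm
    _ = C := by rw [← Units.val_mul, inv_mul_cancel, Units.val_one, one_mul]

open Classical in
/-- the Magnus matrix of a generator -/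
noncomputable def NM (bs : List (α × Bool × ℕ)) (d0 : α × Bool × ℕ) (a : α) : RM bs.length :=
  Matrix.of fun p q : Fin (bs.length + 1) =>
    if (q : ℕ) = (p : ℕ) + 1 ∧ (p : ℕ) < bs.length ∧ (bs.getD p d0).1 = a then 1 else 0

theorem SD_NM (bs : List (α × Bool × ℕ)) (d0 : α × Bool × ℕ) (a : α) : SD 1 (NM bs d0 a) := by
  classical
  intro i j hij
  show (if (j : ℕ) = (i : ℕ) + 1 ∧ (i : ℕ) < bs.length ∧ (bs.getD i d0).1 = a then (1:ℤ) else 0) = 0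
  rw [if_neg]
  rintro ⟨h1, -, -⟩
  omega

theorem NM_sq (bs : List (α × Bool × ℕ)) (d0 : α × Bool × ℕ)
    (hch : bs.Chain' fun x y => x.1 ≠ y.1) (a : α) :
    NM bs d0 a * NM bs d0 a = 0 := by
  classical
  ext p q
  rw [Matrix.mul_apply, Matrix.zero_apply]
  apply Finset.sum_eq_zero
  intro k _
  show (if (k : ℕ) = (p : ℕ) + 1 ∧ (p : ℕ) < bs.length ∧ (bs.getD p d0).1 = a then (1:ℤ) else 0)
      * (if (q : ℕ) = (k : ℕ) + 1 ∧ (k : ℕ) < bs.length ∧ (bs.getD k d0).1 = a then (1:ℤ) else 0) = 0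
  by_cases h1 : (k : ℕ) = (p : ℕ) + 1 ∧ (p : ℕ) < bs.length ∧ (bs.getD p d0).1 = a
  · by_cases h2 : (q : ℕ) = (k : ℕ) + 1 ∧ (k : ℕ) < bs.length ∧ (bs.getD k d0).1 = a
    · exfalso
      obtain ⟨hk, hp, hpa⟩ := h1
      obtain ⟨hq, hkl, hka⟩ := h2
      have hp' : (p : ℕ) < bs.length - 1 := by omega
      have hchain := List.isChain_iff_getElem.mp hch (p : ℕ) (by omega)
      have hchain' : (bs.getD (p : ℕ) d0).1 ≠ (bs.getD ((p : ℕ) + 1) d0).1 := by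
        rw [List.getD_eq_getElem bs d0 hp,
          List.getD_eq_getElem bs d0 (show (p : ℕ) + 1 < bs.length by omega)]
        simpa [List.get_eq_getElem] using hchain
      exact hchain' (by rw [hpa, show (p : ℕ) + 1 = (k : ℕ) from hk.symm, hka])
    · rw [if_neg h2, mul_zero]
  · rw [if_neg h1, zero_mul]

/-- upper unitriangular unit attached to a generator -/
noncomputable def UM (bs : List (α × Bool × ℕ)) (d0 : α × Bool × ℕ)
    (hch : bs.Chain' fun x y => x.1 ≠ y.1) (a : α) : (RM bs.length)ˣ where
  val := 1 + NM bs d0 a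
  inv := 1 - NM bs d0 a
  val_inv := by
    have h : (1 + NM bs d0 a) * (1 - NM bs d0 a) = 1 - NM bs d0 a * NM bs d0 a := by noncomm_ring
    rw [h, NM_sq bs d0 hch a, sub_zero]
  inv_val := by
    have h : (1 - NM bs d0 a) * (1 + NM bs d0 a) = 1 - NM bs d0 a * NM bs d0 a := by noncomm_ring
    rw [h, NM_sq bs d0 hch a, sub_zero]

theorem UM_mem_HU (bs : List (α × Bool × ℕ)) (d0 : α × Bool × ℕ)
    (hch : bs.Chain' fun x y => x.1 ≠ y.1) (a : α) : UM bs d0 hch a ∈ HU bs.length := by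
  rw [mem_HU_iff]
  show SD 1 ((1 + NM bs d0 a) - 1)
  rw [add_sub_cancel_left]
  exact SD_NM bs d0 a

theorem key_mul (bs : List (α × Bool × ℕ)) (d0 : α × Bool × ℕ)
    (hch : bs.Chain' fun x y => x.1 ≠ y.1) (a : α) (s t : ℤ) :
    ((1 : RM bs.length) + s • NM bs d0 a) * (1 + t • NM bs d0 a) = 1 + (s + t) • NM bs d0 a := by
  rw [mul_add, mul_one, mul_smul_comm, add_mul, one_mul, smul_mul_assoc,
    NM_sq bs d0 hch a, smul_zero, add_zero, add_smul]
  abel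

theorem UM_pow_val (bs : List (α × Bool × ℕ)) (d0 : α × Bool × ℕ)
    (hch : bs.Chain' fun x y => x.1 ≠ y.1) (a : α) (n : ℕ) :
    ((UM bs d0 hch a ^ n : (RM bs.length)ˣ) : RM bs.length) = 1 + (n : ℤ) • NM bs d0 a := by
  induction n with
  | zero => simp
  | succ n ih =>
    rw [pow_succ, Units.val_mul, ih]
    have hval : ((UM bs d0 hch a : (RM bs.length)ˣ) : RM bs.length)
        = 1 + (1 : ℤ) • NM bs d0 a := by
      show (1 + NM bs d0 a) = 1 + (1 : ℤ) • NM bs d0 a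
      rw [one_smul]
    rw [hval, key_mul bs d0 hch a]
    push_cast
    ring_nf

theorem UM_zpow_val (bs : List (α × Bool × ℕ)) (d0 : α × Bool × ℕ)
    (hch : bs.Chain' fun x y => x.1 ≠ y.1) (a : α) (e : ℤ) :
    ((UM bs d0 hch a ^ e : (RM bs.length)ˣ) : RM bs.length) = 1 + e • NM bs d0 a := by
  rcases e with n | n
  · rw [Int.ofNat_eq_natCast, zpow_natCast]
    exact UM_pow_val bs d0 hch a n
  · rw [zpow_negSucc]
    apply unit_inv_val
    rw [UM_pow_val bs d0 hch a (n + 1), key_mul bs d0 hch a]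
    have h0 : (((n + 1 : ℕ) : ℤ)) + Int.negSucc n = 0 := by
      push_cast [Int.negSucc_eq]
      ring
    rw [h0, zero_smul, add_zero]

theorem prod_entry (bs : List (α × Bool × ℕ)) (d0 : α × Bool × ℕ)
    (hch : bs.Chain' fun x y => x.1 ≠ y.1) (t : ℕ) (ht : t ≤ bs.length) :
    (∀ q : Fin (bs.length + 1), t < (q : ℕ) →
      ((bs.map fun r => ((UM bs d0 hch r.1 ^ bexp r : (RM bs.length)ˣ) : RM bs.length)).take t).prod
        0 q = 0)
    ∧ ((bs.map fun r => ((UM bs d0 hch r.1 ^ bexp r : (RM bs.length)ˣ) : RM bs.length)).take t).prod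
        0 ⟨t, by omega⟩ = ((bs.map bexp).take t).prod := by
  classical
  induction t with
  | zero =>
    rw [List.take_zero, List.prod_nil, List.take_zero, List.prod_nil]
    constructor
    · intro q hq
      exact Matrix.one_apply_ne (Fin.ne_of_val_ne (show (0 : ℕ) ≠ (q : ℕ) by omega))
    · exact Matrix.one_apply_eq _
  | succ t ih =>
    have ht' : t ≤ bs.length := by omega
    obtain ⟨ih0, ih1⟩ := ih ht'
    have hlt : t < (bs.map fun r =>
        ((UM bs d0 hch r.1 ^ bexp r : (RM bs.length)ˣ) : RM bs.length)).length := by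
      rw [List.length_map]; omega
    have hlt2 : t < (bs.map bexp).length := by rw [List.length_map]; omega
    have htb : t < bs.length := by omega
    rw [List.prod_take_succ _ t hlt, List.prod_take_succ _ t hlt2]
    have hget : (bs.map fun r =>
        ((UM bs d0 hch r.1 ^ bexp r : (RM bs.length)ˣ) : RM bs.length))[t]'hlt
        = 1 + bexp (bs[t]'htb) • NM bs d0 ((bs[t]'htb).1) := by
      rw [List.getElem_map, UM_zpow_val]
    have hget2 : (bs.map bexp)[t]'hlt2 = bexp (bs[t]'htb) := List.getElem_map ..
    rw [hget, hget2]
    set G : RM bs.length := ((bs.map fun r =>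
      ((UM bs d0 hch r.1 ^ bexp r : (RM bs.length)ˣ) : RM bs.length)).take t).prod with hG
    set e : ℤ := bexp (bs[t]'htb) with he
    set N : RM bs.length := NM bs d0 ((bs[t]'htb).1) with hN
    have hNapply : ∀ p q : Fin (bs.length + 1),
        N p q = if (q : ℕ) = (p : ℕ) + 1 ∧ (p : ℕ) < bs.length
          ∧ (bs.getD (p : ℕ) d0).1 = (bs[t]'htb).1 then (1 : ℤ) else 0 := fun p q => rfl
    have hentry : ∀ p q : Fin (bs.length + 1),
        (G * (1 + e • N)) p q = ∑ k, G p k * ((1 : RM bs.length) k q + e * N k q) := by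
      intro p q
      rw [Matrix.mul_apply]
      refine Finset.sum_congr rfl fun k _ => ?_
      rw [Matrix.add_apply, Matrix.smul_apply, smul_eq_mul]
    constructor
    · intro q hq
      rw [hentry]
      apply Finset.sum_eq_zero
      intro k _
      by_cases hk : t < (k : ℕ)
      · rw [ih0 k hk, zero_mul]
      · have h1 : (1 : RM bs.length) k q = 0 := Matrix.one_apply_ne (Fin.ne_of_val_ne (by omega))
        have h2 : N k q = 0 := by rw [hNapply, if_neg]; rintro ⟨hc, -, -⟩; omega
        rw [h1, h2]
        simp
    · rw [hentry]
      rw [Finset.sum_eq_single (⟨t, by omega⟩ : Fin (bs.length + 1))]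
      · have h1 : (1 : RM bs.length) ⟨t, by omega⟩ ⟨t + 1, by omega⟩ = 0 :=
          Matrix.one_apply_ne (Fin.ne_of_val_ne (show t ≠ t + 1 by omega))
        have h2 : N ⟨t, by omega⟩ ⟨t + 1, by omega⟩ = 1 := by
          rw [hNapply, if_pos]
          refine ⟨rfl, htb, ?_⟩
          show (bs.getD t d0).1 = _
          rw [List.getD_eq_getElem bs d0 htb]
        rw [h1, h2, mul_one, zero_add, ih1]
      · intro k _ hk
        by_cases hkt : t < (k : ℕ)
        · rw [ih0 k hkt, zero_mul]
        · have hkq : (k : ℕ) < t := by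
            rcases Nat.lt_or_ge (k : ℕ) t with h | h
            · exact h
            · exact absurd (Fin.ext (show (k : ℕ) = t by omega)) hk
          have h1 : (1 : RM bs.length) k ⟨t + 1, by omega⟩ = 0 :=
            Matrix.one_apply_ne (Fin.ne_of_val_ne (show (k : ℕ) ≠ t + 1 by omega))
          have h2 : N k ⟨t + 1, by omega⟩ = 0 := by
            rw [hNapply, if_neg]
            rintro ⟨hc, -, -⟩
            have hc' : t + 1 = (k : ℕ) + 1 := hc
            omega
          rw [h1, h2]
          simp
      · intro hmem
        exact absurd (Finset.mem_univ _) hmem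

theorem toWord_chain [DecidableEq α] (x : FreeGroup α) :
    x.toWord.Chain' fun p q : α × Bool => p.1 = q.1 → p.2 = q.2 := by
  unfold List.Chain'
  rw [List.isChain_iff_getElem]
  intro i h heq
  change (x.toWord.get ⟨i, by omega⟩).1 = (x.toWord.get ⟨i + 1, h⟩).1 at heq
  change (x.toWord.get ⟨i, by omega⟩).2 = (x.toWord.get ⟨i + 1, h⟩).2
  by_contra hne
  have h1 : i < x.toWord.length := by omega
  have h2 : i + 1 < x.toWord.length := by omega
  set p := x.toWord.get ⟨i, h1⟩ with hp
  set q := x.toWord.get ⟨i + 1, h2⟩ with hq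
  have hq2 : q.2 = !p.2 := by
    cases hb : p.2 <;> cases hb' : q.2 <;> simp_all
  have hdecomp : x.toWord = x.toWord.take i ++ (p.1, p.2) :: (p.1, !p.2) :: x.toWord.drop (i + 2) := by
    have e1 : x.toWord = x.toWord.take i ++ x.toWord.drop i := (List.take_append_drop i _).symm
    have e2 : x.toWord.drop i = p :: x.toWord.drop (i + 1) := by
      rw [List.drop_eq_getElem_cons h1]
      simp [hp, List.get_eq_getElem]
    have e3 : x.toWord.drop (i + 1) = q :: x.toWord.drop (i + 2) := by
      rw [List.drop_eq_getElem_cons h2]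
      simp [hq, List.get_eq_getElem]
    have e4 : (p.1, p.2) = p := rfl
    have e5 : (p.1, !p.2) = q := by
      rw [← hq2, heq]
    rw [e4, e5, ← e3, ← e2, ← e1]
  exact FreeGroup.reduce.not (FreeGroup.reduce_toWord x ▸ hdecomp)

end Magnus
end Stmt6Aux

open Stmt6Aux

/-- wrap a detection homomorphism into a universe-polymorphic statement -/
theorem final_wrap {α : Type u} (G : Type) [Group G] (hnil : Group.IsNilpotent G)
    (htf : Monoid.IsTorsionFree G) (φ' : FreeGroup α →* G) {x : FreeGroup α} (hφ : φ' x ≠ 1) :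
    ∃ (H : Type u) (_ : Group H) (φ : FreeGroup α →* H),
      Group.IsNilpotent H ∧ Monoid.IsTorsionFree H ∧ φ x ≠ 1 := by
  haveI := hnil
  refine ⟨ULift G, inferInstance, (MulEquiv.ulift.symm.toMonoidHom.comp φ'), ?_, ?_, ?_⟩
  · exact nilpotent_of_surjective (MulEquiv.ulift (α := G)).symm.toMonoidHom
      (MulEquiv.ulift (α := G)).symm.surjective
  · intro g hg hfo
    refine htf (MulEquiv.ulift g) ?_ ?_
    · intro h1
      exact hg ((MulEquiv.map_eq_one_iff (MulEquiv.ulift)).mp h1)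
    · exact MulEquiv.ulift.toMonoidHom.isOfFinOrder hfo
  · intro h1
    apply hφ
    exact (MulEquiv.map_eq_one_iff (MulEquiv.ulift.symm)).mp h1

set_option maxHeartbeats 1000000 in
/-- Every free group is residually torsion-free nilpotent. -/
theorem stmt6 (α : Type u) :
    ∀ x : FreeGroup α, x ≠ 1 → ∃ (H : Type u) (_ : Group H) (φ : FreeGroup α →* H),
      Group.IsNilpotent H ∧ Monoid.IsTorsionFree H ∧ φ x ≠ 1 := by
  intro x hx
  classical
  have hl : x.toWord ≠ [] := fun h => hx (FreeGroup.toWord_eq_nil_iff.mp h)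
  set bs : List (α × Bool × ℕ) := blocks x.toWord with hbsdef
  have hbsne : bs ≠ [] := fun h => hl (blocks_eq_nil_iff.mp h)
  have hnb : 1 ≤ bs.length := List.length_pos_iff.mpr hbsne
  set d0 : α × Bool × ℕ := bs.head hbsne with hd0def
  have hch : bs.Chain' fun a b => a.1 ≠ b.1 := blocks_chain (toWord_chain x)
  set U' : α → ↥(HU bs.length) :=
    (fun a => ⟨UM bs d0 hch a, UM_mem_HU bs d0 hch a⟩) with hU'
  set φ' : FreeGroup α →* ↥(HU bs.length) := FreeGroup.lift U' with hφ'
  have hxprod : x = (bs.map fun q => FreeGroup.of q.1 ^ bexp q).prod := by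
    conv_lhs => rw [← FreeGroup.mk_toWord (x := x)]
    rw [blocks_prod]
  have hφx : φ' x = (bs.map fun q => U' q.1 ^ bexp q).prod := by
    rw [hxprod, map_list_prod, List.map_map]
    congr 1
    apply List.map_congr_left
    intro q hq
    show φ' (FreeGroup.of q.1 ^ bexp q) = U' q.1 ^ bexp q
    rw [map_zpow, hφ', FreeGroup.lift_apply_of]
  have hunits : ((HU bs.length).subtype) (φ' x)
      = (bs.map fun q => UM bs d0 hch q.1 ^ bexp q).prod := by
    rw [hφx, map_list_prod, List.map_map]
    congr 1
  have hmat : (Units.coeHom (RM bs.length)) (((HU bs.length).subtype) (φ' x))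
      = (bs.map fun r => ((UM bs d0 hch r.1 ^ bexp r : (RM bs.length)ˣ) : RM bs.length)).prod := by
    rw [hunits, map_list_prod, List.map_map]
    rfl
  obtain ⟨-, hval⟩ := prod_entry bs d0 hch bs.length le_rfl
  have htake1 : (bs.map fun r =>
      ((UM bs d0 hch r.1 ^ bexp r : (RM bs.length)ˣ) : RM bs.length)).take bs.length
      = bs.map fun r => ((UM bs d0 hch r.1 ^ bexp r : (RM bs.length)ˣ) : RM bs.length) := by
    apply List.take_of_length_le
    rw [List.length_map]
  have htake2 : (bs.map bexp).take bs.length = bs.map bexp := by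
    apply List.take_of_length_le
    rw [List.length_map]
  rw [htake1, htake2] at hval
  have hprodne : (bs.map bexp).prod ≠ 0 := by
    apply List.prod_ne_zero
    intro h0
    obtain ⟨q, hq, hq0⟩ := List.mem_map.mp h0
    exact bexp_ne_zero (hbsdef ▸ hq) hq0
  have hφ'x : φ' x ≠ 1 := by
    intro h1
    have hm : (Units.coeHom (RM bs.length)) (((HU bs.length).subtype) (φ' x)) = 1 := by
      rw [h1, map_one, map_one]
    have hentry := hval
    rw [← hmat, hm] at hentry
    have hzero : (1 : RM bs.length) 0 ⟨bs.length, by omega⟩ = 0 :=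
      Matrix.one_apply_ne (Fin.ne_of_val_ne (show (0 : ℕ) ≠ bs.length by omega))
    rw [hzero] at hentry
    exact hprodne hentry.symm
  exact final_wrap ↥(HU bs.length) (HU_nilpotent bs.length) (HU_torsionFree bs.length) φ' hφ'x
end

section
/- Let 1 → H → G → P → 1 be a short exact sequence of groups where P is a finite group and H is residually finite. Then G is residually finite. -/
universe u

/-- If `H ◁ G` with finite quotient and `H` is residually finite, then `G` is
residually finite. -/
theorem stmt7 (G : Type u) [Group G] (H : Subgroup G) [H.Normal] [Finite (G ⧸ H)]
    (hH : ∀ x : H, x ≠ 1 → ∃ (Q : Type u) (_ : Group Q) (_ : Finite Q) (φ : H →* Q),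
      φ x ≠ 1) :
    ∀ x : G, x ≠ 1 → ∃ (Q : Type u) (_ : Group Q) (_ : Finite Q) (φ : G →* Q),
      φ x ≠ 1 := by
  intro x hx
  by_cases hxH : x ∈ H
  · obtain ⟨Q, _, _, φ, hφ⟩ := hH ⟨x, hxH⟩ (by simp [Subtype.ext_iff, hx])
    set K : Subgroup G := φ.ker.map H.subtype with hK
    have hKle : K ≤ H := by simpa using Subgroup.map_subtype_le φ.ker
    have hHfi : H.FiniteIndex := Subgroup.finiteIndex_of_finite_quotient (H := H)
    have hker : Finite (H ⧸ φ.ker) := Finite.of_injective _ (QuotientGroup.kerLift_injective φ)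
    have hkerfi : φ.ker.FiniteIndex := Subgroup.finiteIndex_of_finite_quotient (H := φ.ker)
    have hsub : K.subgroupOf H = φ.ker := by
      rw [hK, Subgroup.subgroupOf, Subgroup.comap_map_eq_self_of_injective H.subtype_injective]
    have hKfi : K.FiniteIndex := by
      constructor
      rw [← Subgroup.relIndex_mul_index hKle]
      have : K.relIndex H = φ.ker.index := by rw [Subgroup.relIndex, hsub]
      rw [this]
      exact mul_ne_zero hkerfi.index_ne_zero hHfi.index_ne_zero
    have hNfi : K.normalCore.FiniteIndex := Subgroup.finiteIndex_normalCore K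
    have : Finite (G ⧸ K.normalCore) := Subgroup.finite_quotient_of_finiteIndex (H := K.normalCore)
    refine ⟨G ⧸ K.normalCore, inferInstance, inferInstance, QuotientGroup.mk' _, ?_⟩
    rw [Ne, QuotientGroup.mk'_apply, QuotientGroup.eq_one_iff]
    intro hxN
    have hxK : x ∈ K := K.normalCore_le hxN
    apply hφ
    have : (⟨x, hxH⟩ : H) ∈ K.subgroupOf H := hxK
    rw [hsub] at this
    exact this
  · exact ⟨G ⧸ H, inferInstance, inferInstance, QuotientGroup.mk' H, by
      simpa [QuotientGroup.eq_one_iff] using hxH⟩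
end

section
/- Let p be a prime, let 1 → H → G → P → 1 be a short exact sequence of groups where P is a finite p-group and H is residually p-finite. Then G is residually p-finite. -/
universe u

/-- If `H ◁ G` with finite `p`-group quotient and `H` is residually `p`-finite, then `G` is
residually `p`-finite. -/
theorem stmt8 (p : ℕ) (hp : p.Prime) (G : Type u) [Group G] (H : Subgroup G) [H.Normal]
    [Finite (G ⧸ H)] (hquot : IsPGroup p (G ⧸ H))
    (hH : ∀ x : H, x ≠ 1 → ∃ (Q : Type u) (_ : Group Q) (_ : Finite Q) (φ : H →* Q),
      IsPGroup p Q ∧ φ x ≠ 1) :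
    ∀ x : G, x ≠ 1 → ∃ (Q : Type u) (_ : Group Q) (_ : Finite Q) (φ : G →* Q),
      IsPGroup p Q ∧ φ x ≠ 1 := by
  have : Fact p.Prime := ⟨hp⟩
  intro x hx
  by_cases hxH : x ∈ H
  · -- x lies in H : use residual p-finiteness of H
    obtain ⟨Q, _, _, φ, hQp, hφx⟩ := hH ⟨x, hxH⟩ (by
      intro h; apply hx; exact congrArg Subtype.val h)
    -- N := image in G of ker φ
    set N : Subgroup G := (φ.ker).map H.subtype with hN
    have hNle : N ≤ H := by
      rintro y ⟨z, _, rfl⟩; exact z.2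
    -- indices
    have hHfi : H.FiniteIndex := Subgroup.finiteIndex_of_finite_quotient (H := H)
    have hrel : N.relIndex H ≠ 0 := by
      have hsub : N.subgroupOf H = φ.ker := by
        rw [hN, Subgroup.subgroupOf,
          Subgroup.comap_map_eq_self_of_injective H.subtype_injective]
      rw [Subgroup.relIndex, hsub]
      have : Finite (↥H ⧸ φ.ker) := Finite.of_injective _
        (QuotientGroup.kerLift_injective φ)
      exact (Subgroup.finiteIndex_of_finite_quotient (H := φ.ker)).index_ne_zero
    have hNfi : N.FiniteIndex := by
      constructor
      rw [← Subgroup.relIndex_mul_index hNle]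
      exact mul_ne_zero hrel hHfi.index_ne_zero
    -- K := normal core of N
    set K : Subgroup G := N.normalCore with hK
    have hKnormal : K.Normal := Subgroup.normalCore_normal N
    have hKfi : K.FiniteIndex := Subgroup.finiteIndex_normalCore N
    have hFin : Finite (G ⧸ K) := Subgroup.finite_quotient_of_finiteIndex (H := K)
    -- uniform exponents
    obtain ⟨a, ha⟩ := (IsPGroup.iff_card).mp hquot
    obtain ⟨n, hn⟩ := (IsPGroup.iff_card).mp hQp
    -- every element of H has p^n-th power in N
    have hHN : ∀ h ∈ H, h ^ p ^ n ∈ N := by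
      intro h hh
      have : φ ⟨h, hh⟩ ^ p ^ n = 1 := by
        rw [← hn]; exact pow_card_eq_one'
      refine Subgroup.mem_map.mpr ⟨⟨h, hh⟩ ^ p ^ n, ?_, rfl⟩
      rwa [MonoidHom.mem_ker, map_pow]
    -- G / K is a p-group
    have hGKp : IsPGroup p (G ⧸ K) := by
      intro g
      obtain ⟨g, rfl⟩ := QuotientGroup.mk_surjective g
      refine ⟨a + n, ?_⟩
      rw [← QuotientGroup.mk_pow, QuotientGroup.eq_one_iff]
      have hga : g ^ p ^ a ∈ H := by
        have : (QuotientGroup.mk g : G ⧸ H) ^ p ^ a = 1 := by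
          rw [← ha]; exact pow_card_eq_one'
        rwa [← QuotientGroup.mk_pow, QuotientGroup.eq_one_iff] at this
      show ∀ b : G, b * g ^ p ^ (a + n) * b⁻¹ ∈ N
      intro b
      have hbg : b * g ^ p ^ a * b⁻¹ ∈ H := Subgroup.Normal.conj_mem ‹H.Normal› _ hga b
      have heq : b * g ^ p ^ (a + n) * b⁻¹ = (b * g ^ p ^ a * b⁻¹) ^ p ^ n := by
        rw [conj_pow, ← pow_mul, ← pow_add]
      rw [heq]
      exact hHN _ hbg
    -- x ∉ K
    have hxK : (QuotientGroup.mk x : G ⧸ K) ≠ 1 := by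
      rw [Ne, QuotientGroup.eq_one_iff]
      intro hxk
      have hxN : x ∈ N := Subgroup.normalCore_le N hxk
      obtain ⟨z, hz, hzx⟩ := hxN
      have : z = ⟨x, hxH⟩ := Subtype.ext hzx
      subst this
      exact hφx hz
    exact ⟨G ⧸ K, inferInstance, hFin, QuotientGroup.mk' K, hGKp, hxK⟩
  · -- x ∉ H : use the quotient G/H
    refine ⟨G ⧸ H, inferInstance, inferInstance, QuotientGroup.mk' H, hquot, ?_⟩
    rwa [Ne, QuotientGroup.mk'_apply, QuotientGroup.eq_one_iff]
end

section
/- Let 1 → H → G → P → 1 be a short exact sequence of groups where P is solvable and H is residually solvable. Then G is residually solvable. -/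
universe u

/-- If `H ◁ G` with solvable quotient and `H` is residually solvable, then `G` is
residually solvable. -/
theorem stmt9 (G : Type u) [Group G] (H : Subgroup G) [H.Normal]
    (hquot : IsSolvable (G ⧸ H))
    (hH : ∀ x : H, x ≠ 1 → ∃ (Q : Type u) (_ : Group Q) (φ : H →* Q),
      IsSolvable Q ∧ φ x ≠ 1) :
    ∀ x : G, x ≠ 1 → ∃ (Q : Type u) (_ : Group Q) (φ : G →* Q),
      IsSolvable Q ∧ φ x ≠ 1 := by
  intro x hx
  by_cases hxH : x ∈ H
  · obtain ⟨Q, _, ψ, hQ, hψ⟩ := hH ⟨x, hxH⟩ (by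
      intro h
      exact hx (by simpa using congrArg Subtype.val h))
    obtain ⟨n, hn⟩ := hQ.solvable
    haveI := derivedSeries_normal H n
    -- the image in `G` of the n-th derived subgroup of `H`
    set K : Subgroup G := (derivedSeries H n).map H.subtype with hK
    have hDker : derivedSeries H n ≤ ψ.ker := by
      intro a ha
      have : ψ a ∈ (derivedSeries H n).map ψ := ⟨a, ha, rfl⟩
      have h2 := map_derivedSeries_le_derivedSeries ψ n this
      rw [hn, Subgroup.mem_bot] at h2
      exact h2
    have hKnormal : K.Normal := by
      constructor
      rintro a ⟨b, hb, rfl⟩ g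
      have hmem : MulAut.conjNormal (H := H) g b ∈ derivedSeries H n := by
        have := map_derivedSeries_eq (f := (MulAut.conjNormal (H := H) g).toMonoidHom)
          (MulAut.conjNormal (H := H) g).surjective n
        rw [← this]
        exact ⟨b, hb, rfl⟩
      refine ⟨MulAut.conjNormal (H := H) g b, hmem, ?_⟩
      simp [MulAut.conjNormal_apply]
    have hKH : K ≤ H := by
      rintro a ⟨b, _, rfl⟩
      exact b.2
    -- the maps
    have hker : derivedSeries H n ≤ ((QuotientGroup.mk' K).comp H.subtype).ker := by
      intro a ha
      simp only [MonoidHom.mem_ker, MonoidHom.comp_apply, QuotientGroup.mk'_apply]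
      rw [QuotientGroup.eq_one_iff]
      exact ⟨a, ha, rfl⟩
    let f : H ⧸ derivedSeries H n →* G ⧸ K :=
      QuotientGroup.lift (derivedSeries H n) ((QuotientGroup.mk' K).comp H.subtype) hker
    let g : G ⧸ K →* G ⧸ H :=
      QuotientGroup.lift K (QuotientGroup.mk' H) (by
        intro a ha
        simpa [QuotientGroup.eq_one_iff] using hKH ha)
    have hsolv1 : IsSolvable (H ⧸ derivedSeries H n) := by
      refine ⟨⟨n, ?_⟩⟩
      rw [← map_derivedSeries_eq (f := QuotientGroup.mk' (derivedSeries H n))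
        (QuotientGroup.mk'_surjective _) n]
      rw [Subgroup.map_eq_bot_iff]
      intro a ha
      simpa [QuotientGroup.eq_one_iff] using ha
    have hrange : g.ker ≤ f.range := by
      intro q hq
      induction q using QuotientGroup.induction_on with
      | H a =>
        have ha : a ∈ H := by
          have : (QuotientGroup.mk' H) a = 1 := hq
          rwa [QuotientGroup.mk'_apply, QuotientGroup.eq_one_iff] at this
        exact ⟨QuotientGroup.mk ⟨a, ha⟩, rfl⟩
    haveI := hquot
    haveI := hsolv1
    refine ⟨G ⧸ K, inferInstance, QuotientGroup.mk' K,
      solvable_of_ker_le_range f g hrange (hG' := hsolv1) (hG'' := hquot), ?_⟩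
    intro h
    rw [QuotientGroup.mk'_apply, QuotientGroup.eq_one_iff] at h
    obtain ⟨b, hb, hbx⟩ := h
    have : b = ⟨x, hxH⟩ := Subtype.ext hbx
    subst this
    exact hψ (hDker hb)
  · refine ⟨G ⧸ H, inferInstance, QuotientGroup.mk' H, hquot, ?_⟩
    intro h
    rw [QuotientGroup.mk'_apply, QuotientGroup.eq_one_iff] at h
    exact hxH h
end

section
/- For the Artin braid group Bₙ with n ≥ 3, the second and third terms of the lower central series coincide: Γ₂(Bₙ) = Γ₃(Bₙ). -/
universe u

/-- The braid relations on `n - 1` generators `σ₀, …, σ_{n-2}`: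
`σᵢσⱼ = σⱼσᵢ` for `|i - j| ≥ 2` and `σᵢσᵢ₊₁σᵢ = σᵢ₊₁σᵢσᵢ₊₁`. -/
def braidRels (n : ℕ) : Set (FreeGroup (Fin (n - 1))) :=
  {r | (∃ i j : Fin (n - 1), (i : ℕ) + 2 ≤ (j : ℕ) ∧
          r = FreeGroup.of i * FreeGroup.of j * (FreeGroup.of j * FreeGroup.of i)⁻¹) ∨
       (∃ i j : Fin (n - 1), (j : ℕ) = (i : ℕ) + 1 ∧
          r = FreeGroup.of i * FreeGroup.of j * FreeGroup.of i *
              (FreeGroup.of j * FreeGroup.of i * FreeGroup.of j)⁻¹)}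

/-- Elements of the relation set map to 1 in the presented group. -/
lemma presented_rel_eq_one {α : Type u} {rels : Set (FreeGroup α)} {r : FreeGroup α}
    (hr : r ∈ rels) : PresentedGroup.mk rels r = 1 := by
  have : r ∈ Subgroup.normalClosure rels := Subgroup.subset_normalClosure hr
  exact (QuotientGroup.eq_one_iff r).mpr this

open scoped commutatorElement

/-- For the Artin braid group `Bₙ`, `n ≥ 3`, one has `Γ₂(Bₙ) = Γ₃(Bₙ)`.
(`Γ₁(G) = G` corresponds to `lowerCentralSeries G 0`.) -/
theorem stmt14 (n : ℕ) (hn : 3 ≤ n) :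
    (⊤ : Subgroup (PresentedGroup (braidRels n))).lowerCentralSeries 1 =
      (⊤ : Subgroup (PresentedGroup (braidRels n))).lowerCentralSeries 2 := by
  set G := PresentedGroup (braidRels n) with hG
  refine le_antisymm ?_ (Subgroup.lowerCentralSeries_antitone _ (by norm_num))
  -- It suffices to show every commutator lies in Γ₃ = lowerCentralSeries G 2.
  set N : Subgroup G := (⊤ : Subgroup G).lowerCentralSeries 2 with hN
  have hNnormal : N.Normal := inferInstance
  -- Work in the quotient Q = G / N.
  set Q := G ⧸ N with hQ
  let π : G →* Q := QuotientGroup.mk' N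
  have hπsurj : Function.Surjective π := QuotientGroup.mk'_surjective N
  -- In Q, all commutators are central.
  have hcent : ∀ a b c : Q, ⁅⁅a, b⁆, c⁆ = 1 := by
    intro a b c
    obtain ⟨x, rfl⟩ := hπsurj a
    obtain ⟨y, rfl⟩ := hπsurj b
    obtain ⟨z, rfl⟩ := hπsurj c
    have hmem : ⁅⁅x, y⁆, z⁆ ∈ N := by
      have h1 : ⁅x, y⁆ ∈ (⊤ : Subgroup G).lowerCentralSeries 1 := by
        rw [Subgroup.top_lowerCentralSeries_one]
        exact Subgroup.commutator_mem_commutator (Subgroup.mem_top x) (Subgroup.mem_top y)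
      exact Subgroup.commutator_mem_commutator h1 (Subgroup.mem_top z)
    have : π ⁅⁅x, y⁆, z⁆ = 1 := (QuotientGroup.eq_one_iff _).mpr hmem
    simpa [map_commutatorElement] using this
  have hcomm_central : ∀ a b c : Q, Commute ⁅a, b⁆ c := fun a b c =>
    commutatorElement_eq_one_iff_commute.mp (hcent a b c)
  -- generators of Q
  let t : Fin (n - 1) → Q := fun i => π (PresentedGroup.of i)
  -- the braid relation in Q for consecutive indices
  have hbraid : ∀ i j : Fin (n - 1), (j : ℕ) = (i : ℕ) + 1 →
      t i * t j * t i = t j * t i * t j := by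
    intro i j hij
    have hr : (FreeGroup.of i * FreeGroup.of j * FreeGroup.of i *
        (FreeGroup.of j * FreeGroup.of i * FreeGroup.of j)⁻¹ : FreeGroup (Fin (n-1)))
        ∈ braidRels n := Or.inr ⟨i, j, hij, rfl⟩
    have h1 : PresentedGroup.of (rels := braidRels n) i * PresentedGroup.of j *
        PresentedGroup.of i =
        PresentedGroup.of j * PresentedGroup.of i * PresentedGroup.of j := by
      have := presented_rel_eq_one hr
      simp only [map_mul, map_inv] at this
      have h2 := mul_eq_one_iff_eq_inv.mp this
      rw [inv_inv] at h2
      exact h2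
    simpa only [t, map_mul] using congrArg π h1
  -- consecutive generators differ by a central element
  have hconsec : ∀ i j : Fin (n - 1), (j : ℕ) = (i : ℕ) + 1 →
      ∃ z : Q, (∀ q : Q, Commute z q) ∧ t j = t i * z := by
    intro i j hij
    have hb := hbraid i j hij
    -- t j = (t i * t j) * t i * (t i * t j)⁻¹
    have hconj : t j = (t i * t j) * t i * (t i * t j)⁻¹ := by
      have h1 : (t i * t j) * t i * (t i * t j)⁻¹ =
          (t i * t j * t i) * (t j)⁻¹ * (t i)⁻¹ := by group
      rw [h1, hb]
      group
    refine ⟨(t i)⁻¹ * t j, ?_, by group⟩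
    intro q
    have : (t i)⁻¹ * t j = ⁅(t i)⁻¹, t i * t j⁆ := by
      rw [commutatorElement_def]
      nth_rewrite 1 [hconj]
      group
    rw [this]
    exact hcomm_central _ _ q
  -- every generator differs from t 0 by a central element
  have hn1 : 1 ≤ n - 1 := by omega
  have ht0 : ∀ m : ℕ, ∀ hm : m < n - 1,
      ∃ z : Q, (∀ q : Q, Commute z q) ∧ t ⟨m, hm⟩ = t ⟨0, by omega⟩ * z := by
    intro m
    induction m with
    | zero => intro hm; exact ⟨1, fun q => Commute.one_left q, by simp⟩
    | succ k ih =>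
      intro hm
      have hk : k < n - 1 := by omega
      obtain ⟨z, hz, hzt⟩ := ih hk
      obtain ⟨w, hw, hwt⟩ := hconsec ⟨k, hk⟩ ⟨k+1, hm⟩ rfl
      exact ⟨z * w, fun q => (hz q).mul_left (hw q), by rw [hwt, hzt, mul_assoc]⟩
  -- hence all generators commute pairwise
  have htcomm : ∀ i j : Fin (n - 1), Commute (t i) (t j) := by
    intro i j
    obtain ⟨z, hz, hzt⟩ := ht0 i i.2
    obtain ⟨w, hw, hwt⟩ := ht0 j j.2
    have hi : t i = t ⟨0, by omega⟩ * z := by simpa using hzt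
    have hj : t j = t ⟨0, by omega⟩ * w := by simpa using hwt
    rw [hi, hj]
    exact ((Commute.refl _).mul_right (hw _).symm).mul_left
      ((hz _).mul_right (hz _))
  -- Q is commutative
  have hQcomm : ∀ a b : Q, Commute a b := by
    have hgen : Subgroup.closure (Set.range t) = (⊤ : Subgroup Q) := by
      rw [eq_top_iff]
      intro q _
      obtain ⟨g, rfl⟩ := hπsurj q
      have : Subgroup.closure (Set.range (PresentedGroup.of : Fin (n-1) → G)) = ⊤ :=
        PresentedGroup.closure_range_of (braidRels n)
      have hg : g ∈ Subgroup.closure (Set.range (PresentedGroup.of : Fin (n-1) → G)) := by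
        rw [this]; trivial
      refine Subgroup.closure_induction (fun x hx => ?_) ?_ ?_ ?_ hg
      · obtain ⟨i, rfl⟩ := hx
        exact Subgroup.subset_closure ⟨i, rfl⟩
      · simpa using (Subgroup.closure (Set.range t)).one_mem
      · intro x y _ _ hx hy
        simpa [map_mul] using (Subgroup.closure (Set.range t)).mul_mem hx hy
      · intro x _ hx
        simpa [map_inv] using (Subgroup.closure (Set.range t)).inv_mem hx
    intro a b
    have ha : a ∈ Subgroup.closure (Set.range t) := by rw [hgen]; trivial
    have hb : b ∈ Subgroup.closure (Set.range t) := by rw [hgen]; trivial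
    refine Subgroup.closure_induction (fun x hx => ?_) ?_ ?_ ?_ hb
    · -- commute with a fixed generator-range element: need induction on a too
      refine Subgroup.closure_induction (fun y hy => ?_) ?_ ?_ ?_ ha
      · obtain ⟨i, rfl⟩ := hy; obtain ⟨j, rfl⟩ := hx; exact htcomm i j
      · exact Commute.one_left x
      · intro u v _ _ hu hv; exact hu.mul_left hv |>.symm |>.symm
      · intro u _ hu; exact hu.inv_left
    · exact Commute.one_right a
    · intro u v _ _ hu hv; exact hu.mul_right hv
    · intro u _ hu; exact hu.inv_right
  -- conclude: Γ₂ ≤ Γ₃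
  rw [Subgroup.top_lowerCentralSeries_one]
  rw [commutator_def, Subgroup.commutator_le]
  intro g₁ _ g₂ _
  have : π ⁅g₁, g₂⁆ = 1 := by
    rw [map_commutatorElement]
    exact commutatorElement_eq_one_iff_commute.mpr (hQcomm (π g₁) (π g₂))
  exact (QuotientGroup.eq_one_iff _).mp this
end
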